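/- arXiv:0901.2915 — 2 statements merged into one kernel-verified Lean document; each statement's English description precedes it below -/
import Mathlib

section
/- Let A ∈ ℤ_max^{n×n}, C ∈ ℤ_max^{q×n}, and V = ker E where E ∈ ℤ_max^{p×n} has finite volume. Then the set of cofinitely generated (C,A)-conditioned invariant congruences containing V admits a minimal element V_fg(C,A). Moreover, defining K := V^⊤, φ(X) := K ∩ (Aᵗ)^{-1}(X ⊕ Im Cᵗ), X_1 := K, X_{k+1} := φ(X_k), there is an index r ≤ vol(E)+1 such that X_{r+1} = X_r and V_fg(C,A) = (X_r)^⊥. -/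
/-!
Max-plus (tropical) framework.

The max-plus semiring `ℝ_max = ℝ ∪ {-∞}` is modelled as `WithBot ℝ`:
max-plus addition `a ⊕ b = max a b` is the lattice `⊔`, and max-plus
multiplication `a ⊙ b = a + b` is `+` (with `⊥ = -∞` absorbing).
The topology induced by the metric `d(a,b) = |exp a - exp b|` is the
order topology.
-/

/-- The max-plus semiring `ℝ ∪ {-∞}`. -/
abbrev Rmax : Type := WithBot ℝ

/-- The topology of `ℝ_max` (the order topology, which coincides with the
topology induced by the metric `d(a,b) = |exp a - exp b|`). -/
instance : TopologicalSpace Rmax := Preorder.topology Rmax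

instance : OrderTopology Rmax := ⟨rfl⟩

/-- Vectors with entries in a (max-plus-like) semiring `R`. -/
abbrev Vec (R : Type*) (n : ℕ) := Fin n → R

section Defs

variable {R : Type*} [LinearOrder R] [Add R] [OrderBot R]

/-- Max-plus scalar action on a vector: `(λ x)_i = λ ⊙ x_i = λ + x_i`. -/
def sm {n : ℕ} (lam : R) (x : Vec R n) : Vec R n := fun i => lam + x i

/-- Max-plus matrix-vector product: `(A x)_i = ⊕_k A_{ik} ⊙ x_k = max_k (A_{ik} + x_k)`. -/
def mulVecMP {m n : ℕ} (A : Matrix (Fin m) (Fin n) R) (x : Vec R n) : Vec R m :=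
  fun i => Finset.univ.sup fun k => A i k + x k

/-- A subsemimodule (max-plus cone) of `R^n`: a subset stable under
max-plus linear combinations `λ x ⊕ μ y`. -/
def IsSemimodule {n : ℕ} (K : Set (Vec R n)) : Prop :=
  ∀ x ∈ K, ∀ y ∈ K, ∀ lam mu : R, (sm lam x ⊔ sm mu y) ∈ K

/-- Max-plus scalar action on a pair of vectors. -/
def smP {n : ℕ} (lam : R) (p : Vec R n × Vec R n) : Vec R n × Vec R n :=
  (sm lam p.1, sm lam p.2)

/-- A subsemimodule of `(R^n)²`. -/
def IsPairSemimodule {n : ℕ} (W : Set (Vec R n × Vec R n)) : Prop :=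
  ∀ p ∈ W, ∀ q ∈ W, ∀ lam mu : R, (smP lam p ⊔ smP mu q) ∈ W

/-- A congruence on `R^n`: an equivalence relation which is a
subsemimodule of `(R^n)²`. -/
def IsCongruence {n : ℕ} (W : Set (Vec R n × Vec R n)) : Prop :=
  Equivalence (fun x y => (x, y) ∈ W) ∧ IsPairSemimodule W

/-- The (max-plus) kernel of a matrix: `ker E = {(x,y) : E x = E y}`. -/
def kerM {p n : ℕ} (E : Matrix (Fin p) (Fin n) R) : Set (Vec R n × Vec R n) :=
  {w | mulVecMP E w.1 = mulVecMP E w.2}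

/-- The image of a matrix: `Im E = {E x}`. -/
def imM {n q : ℕ} (E : Matrix (Fin n) (Fin q) R) : Set (Vec R n) :=
  {y | ∃ x : Vec R q, y = mulVecMP E x}

/-- `A W = {(A x, A y) : (x,y) ∈ W}` for a set of pairs `W`. -/
def mapCong {n : ℕ} (A : Matrix (Fin n) (Fin n) R) (W : Set (Vec R n × Vec R n)) :
    Set (Vec R n × Vec R n) :=
  {p | ∃ w ∈ W, p = (mulVecMP A w.1, mulVecMP A w.2)}

/-- `A S = {A x : x ∈ S}`. -/
def mapSet {n : ℕ} (A : Matrix (Fin n) (Fin n) R) (S : Set (Vec R n)) : Set (Vec R n) :=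
  {y | ∃ x ∈ S, y = mulVecMP A x}

/-- `A⁻¹ S = {x : A x ∈ S}`. -/
def invSet {n : ℕ} (A : Matrix (Fin n) (Fin n) R) (S : Set (Vec R n)) : Set (Vec R n) :=
  {x | mulVecMP A x ∈ S}

/-- `A⁻¹ U = {(x,y) : (A x, A y) ∈ U}` for a set of pairs `U`. -/
def invPair {n : ℕ} (A : Matrix (Fin n) (Fin n) R) (U : Set (Vec R n × Vec R n)) :
    Set (Vec R n × Vec R n) :=
  {p | (mulVecMP A p.1, mulVecMP A p.2) ∈ U}

/-- The max-plus sum of two subsets of `R^n`: `X ⊕ Y = {x ⊕ y : x ∈ X, y ∈ Y}`. -/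
def setSum {n : ℕ} (X Y : Set (Vec R n)) : Set (Vec R n) :=
  {z | ∃ x ∈ X, ∃ y ∈ Y, z = x ⊔ y}

/-- The max-plus sum of two subsets of `(R^n)²`. -/
def pairSum {n : ℕ} (X Y : Set (Vec R n × Vec R n)) : Set (Vec R n × Vec R n) :=
  {z | ∃ x ∈ X, ∃ y ∈ Y, z = x ⊔ y}

/-- `W` is `(C,A)`-conditioned invariant: `A (W ∩ ker C) ⊆ W`. -/
def CondInv {n q : ℕ} (C : Matrix (Fin q) (Fin n) R) (A : Matrix (Fin n) (Fin n) R)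
    (W : Set (Vec R n × Vec R n)) : Prop :=
  mapCong A (W ∩ kerM C) ⊆ W

/-- `X` is `(A,B)`-controlled invariant: `A X ⊆ X ⊕ Im B`. -/
def ContrInv {n q : ℕ} (A : Matrix (Fin n) (Fin n) R) (B : Matrix (Fin n) (Fin q) R)
    (X : Set (Vec R n)) : Prop :=
  mapSet A X ⊆ setSum X (imM B)

/-- The max-plus scalar product `uᵗ v = ⊕_i u_i ⊙ v_i = max_i (u_i + v_i)`. -/
def dotMP {n : ℕ} (u v : Vec R n) : R := Finset.univ.sup fun i => u i + v i

/-- The orthogonal of a semimodule `X ⊆ R^n`: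
`X^⊥ = {(x,y) : xᵗ z = yᵗ z, ∀ z ∈ X}`. -/
def orthS {n : ℕ} (X : Set (Vec R n)) : Set (Vec R n × Vec R n) :=
  {p | ∀ z ∈ X, dotMP p.1 z = dotMP p.2 z}

/-- The orthogonal of a congruence (or set of pairs) `W ⊆ (R^n)²`:
`W^⊤ = {z : xᵗ z = yᵗ z, ∀ (x,y) ∈ W}`. -/
def orthC {n : ℕ} (W : Set (Vec R n × Vec R n)) : Set (Vec R n) :=
  {z | ∀ p ∈ W, dotMP p.1 z = dotMP p.2 z}

/-- The smallest congruence containing a set `S ⊆ (R^n)²`. -/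
def spanCong {n : ℕ} (S : Set (Vec R n × Vec R n)) : Set (Vec R n × Vec R n) :=
  ⋂₀ {W | IsCongruence W ∧ S ⊆ W}

/-- The smallest semimodule containing a set `S ⊆ R^n`. -/
def spanSet {n : ℕ} (S : Set (Vec R n)) : Set (Vec R n) :=
  ⋂₀ {K | IsSemimodule K ∧ S ⊆ K}

end Defs

/-- The integer max-plus semiring `ℤ_max = ℤ ∪ {-∞}`. -/
abbrev Zmax : Type := WithBot ℤ

/-! ### Auxiliary development -/

section Aux

open Finset

/-- additive translation distributes over finite sup in `Zmax`. -/
lemma zadd_sup {ι : Type*} (s : Finset ι) (f : ι → Zmax) (c : Zmax) :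
    c + s.sup f = s.sup fun i => c + f i :=
  Finset.comp_sup_eq_sup_comp (fun t => c + t) (fun x y => add_max c x y) (WithBot.add_bot c)

lemma zsup_add {ι : Type*} (s : Finset ι) (f : ι → Zmax) (c : Zmax) :
    s.sup f + c = s.sup fun i => f i + c := by
  rw [add_comm, zadd_sup]; simp [add_comm]

lemma dot_comm {n : ℕ} (x y : Vec Zmax n) : dotMP x y = dotMP y x := by
  unfold dotMP; simp [add_comm]

lemma dot_swap {m n : ℕ} (G : Matrix (Fin m) (Fin n) Zmax) (x : Vec Zmax m) (w : Vec Zmax n) :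
    dotMP x (mulVecMP G w) = dotMP (mulVecMP G.transpose x) w := by
  unfold dotMP mulVecMP
  simp only [zadd_sup, zsup_add]
  rw [Finset.sup_comm]
  congr 1; funext k; congr 1; funext i
  rw [Matrix.transpose_apply]; simp [add_comm, add_left_comm, add_assoc]

/-- the unit vector `e_i`. -/
def unitv {n : ℕ} (i : Fin n) : Vec Zmax n := fun k => if k = i then (0 : Zmax) else ⊥

lemma sup_single {n : ℕ} (i : Fin n) (f : Fin n → Zmax) (h : ∀ k, k ≠ i → f k = ⊥) :
    Finset.univ.sup f = f i := by
  apply le_antisymm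
  · exact Finset.sup_le fun k _ => by
      rcases eq_or_ne k i with rfl | hk
      · exact le_rfl
      · simp [h k hk]
  · exact Finset.le_sup (Finset.mem_univ i)

lemma dot_unitv {n : ℕ} (x : Vec Zmax n) (i : Fin n) : dotMP x (unitv i) = x i := by
  unfold dotMP unitv
  rw [sup_single i]
  · simp
  · intro k hk; simp [hk]

lemma dot_unitv' {n : ℕ} (x : Vec Zmax n) (i : Fin n) : dotMP (unitv i) x = x i := by
  rw [dot_comm, dot_unitv]

lemma mulVec_unitv {m n : ℕ} (G : Matrix (Fin m) (Fin n) Zmax) (k : Fin n) :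
    mulVecMP G (unitv k) = fun i => G i k := by
  funext i
  unfold mulVecMP unitv
  rw [sup_single k]
  · simp
  · intro k' hk'; simp [hk']

lemma mulVec_bot {m n : ℕ} (G : Matrix (Fin m) (Fin n) Zmax) :
    mulVecMP G (⊥ : Vec Zmax n) = ⊥ := by
  funext i
  unfold mulVecMP
  simp

lemma dot_bot {n : ℕ} (x : Vec Zmax n) : dotMP x (⊥ : Vec Zmax n) = ⊥ := by
  unfold dotMP; simp

lemma mulVec_mono {m n : ℕ} (G : Matrix (Fin m) (Fin n) Zmax) {x y : Vec Zmax n} (h : x ≤ y) :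
    mulVecMP G x ≤ mulVecMP G y := by
  intro i
  exact Finset.sup_mono_fun fun k _ => add_le_add_right (h k) _

lemma mulVec_sup {m n : ℕ} (G : Matrix (Fin m) (Fin n) Zmax) (x y : Vec Zmax n) :
    mulVecMP G (x ⊔ y) = mulVecMP G x ⊔ mulVecMP G y := by
  funext i
  show Finset.univ.sup _ = Finset.univ.sup _ ⊔ Finset.univ.sup _
  rw [← Finset.sup_sup]
  congr 1; funext k
  show G i k + (x k ⊔ y k) = _
  exact add_max _ _ _

lemma mulVec_sm {m n : ℕ} (G : Matrix (Fin m) (Fin n) Zmax) (c : Zmax) (x : Vec Zmax n) :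
    mulVecMP G (sm c x) = sm c (mulVecMP G x) := by
  funext i
  show Finset.univ.sup _ = c + Finset.univ.sup _
  rw [zadd_sup]
  congr 1; funext k
  show G i k + (c + x k) = c + (G i k + x k)
  simp [add_comm, add_left_comm, add_assoc]

lemma dot_sup_left {n : ℕ} (x y z : Vec Zmax n) : dotMP (x ⊔ y) z = dotMP x z ⊔ dotMP y z := by
  unfold dotMP
  rw [← Finset.sup_sup]
  congr 1; funext k
  show (x k ⊔ y k) + z k = _
  exact (max_add_add_right (x k) (y k) (z k)).symm

lemma dot_sm_left {n : ℕ} (c : Zmax) (x z : Vec Zmax n) : dotMP (sm c x) z = c + dotMP x z := by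
  unfold dotMP
  rw [zadd_sup]
  congr 1; funext k
  show c + x k + z k = c + (x k + z k)
  simp [add_comm, add_left_comm, add_assoc]

lemma dot_sup_right {n : ℕ} (x y z : Vec Zmax n) : dotMP z (x ⊔ y) = dotMP z x ⊔ dotMP z y := by
  rw [dot_comm, dot_sup_left, dot_comm x, dot_comm y]

lemma sup_sm {n : ℕ} (c : Zmax) (x : Vec Zmax n) :
    Finset.univ.sup (sm c x) = c + Finset.univ.sup x := by
  rw [zadd_sup]; rfl

lemma sm_sm {n : ℕ} (a b : Zmax) (x : Vec Zmax n) : sm a (sm b x) = sm (a + b) x := by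
  funext i; show a + (b + x i) = (a + b) + x i; simp [add_comm, add_left_comm, add_assoc]

lemma sm_zero {n : ℕ} (x : Vec Zmax n) : sm (0 : Zmax) x = x := by
  funext i; show (0 : Zmax) + x i = x i; exact zero_add _

lemma imM_semimodule {m n : ℕ} (G : Matrix (Fin n) (Fin m) Zmax) : IsSemimodule (imM G) := by
  rintro x ⟨u, rfl⟩ y ⟨v, rfl⟩ a b
  exact ⟨sm a u ⊔ sm b v, by rw [mulVec_sup, mulVec_sm, mulVec_sm]⟩

lemma imM_bot {m n : ℕ} (G : Matrix (Fin n) (Fin m) Zmax) : (⊥ : Vec Zmax n) ∈ imM G :=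
  ⟨⊥, (mulVec_bot G).symm⟩

lemma semimodule_sm {n : ℕ} {X : Set (Vec Zmax n)} (hX : IsSemimodule X) {x : Vec Zmax n}
    (hx : x ∈ X) (c : Zmax) : sm c x ∈ X := by
  have := hX x hx x hx c c
  rwa [sup_idem] at this

lemma semimodule_sup {n : ℕ} {X : Set (Vec Zmax n)} (hX : IsSemimodule X) {x y : Vec Zmax n}
    (hx : x ∈ X) (hy : y ∈ X) : x ⊔ y ∈ X := by
  have := hX x hx y hy 0 0
  rwa [sm_zero, sm_zero] at this

end Aux

section Aux2

/-- negation on `Zmax`. -/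
def mneg : Zmax → Zmax := WithBot.map Neg.neg

lemma mneg_coe (m : ℤ) : mneg (m : Zmax) = ((-m : ℤ) : Zmax) := rfl

lemma mneg_bot : mneg (⊥ : Zmax) = ⊥ := rfl

lemma zcancel (d : Zmax) (m m' : ℤ) (h : m + m' = 0) : (d + (m : Zmax)) + (m' : Zmax) = d := by
  rw [add_assoc, ← WithBot.coe_add, h, WithBot.coe_zero, add_zero]

lemma zcancel_neg (d : Zmax) (m : ℤ) : (d + (m : Zmax)) + ((-m : ℤ) : Zmax) = d :=
  zcancel d m (-m) (add_neg_cancel m)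

lemma zcancel_neg' (d : Zmax) (m : ℤ) : (d + ((-m : ℤ) : Zmax)) + (m : Zmax) = d :=
  zcancel d (-m) m (neg_add_cancel m)

lemma add_coe_le_add_coe {x y : Zmax} (m : ℤ) : x + (m : Zmax) ≤ y + (m : Zmax) ↔ x ≤ y := by
  constructor
  · intro h
    have := add_le_add_left h ((-m : ℤ) : Zmax)
    rwa [zcancel_neg, zcancel_neg] at this
  · intro h; exact add_le_add_left h _

lemma add_coe_lt_add_coe {x y : Zmax} (m : ℤ) : x + (m : Zmax) < y + (m : Zmax) ↔ x < y := by
  rw [lt_iff_le_not_ge, lt_iff_le_not_ge, add_coe_le_add_coe, add_coe_le_add_coe]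

/-- greatest-lower-bound-style witness for nonempty subsets of `Zmax`. -/
lemma exists_glb (S : Set Zmax) (hS : S.Nonempty) :
    ∃ u : Zmax, (∀ d ∈ S, u ≤ d) ∧ ∀ c : Zmax, u < c → ∃ d ∈ S, d < c := by
  by_cases hbot : (⊥ : Zmax) ∈ S
  · exact ⟨⊥, fun d _ => bot_le, fun c hc => ⟨⊥, hbot, hc⟩⟩
  by_cases hb : ∃ b : ℤ, ∀ m : ℤ, (m : Zmax) ∈ S → b ≤ m
  · obtain ⟨lb, hlb, hleast⟩ := Int.exists_least_of_bdd (P := fun m : ℤ => (m : Zmax) ∈ S)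
      hb (by
        obtain ⟨d, hd⟩ := hS
        rcases eq_or_ne d ⊥ with rfl | hdb
        · exact absurd hd hbot
        · obtain ⟨m, rfl⟩ := WithBot.ne_bot_iff_exists.mp hdb
          exact ⟨m, hd⟩)
    refine ⟨(lb : Zmax), ?_, ?_⟩
    · intro d hd
      rcases eq_or_ne d ⊥ with rfl | hdb
      · exact absurd hd hbot
      · obtain ⟨m, rfl⟩ := WithBot.ne_bot_iff_exists.mp hdb
        exact_mod_cast hleast m hd
    · intro c hc
      exact ⟨lb, hlb, hc⟩
  · refine ⟨⊥, fun d _ => bot_le, ?_⟩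
    intro c hc
    rcases eq_or_ne c ⊥ with rfl | hdb
    · exact absurd hc (lt_irrefl _)
    · obtain ⟨γ, rfl⟩ := WithBot.ne_bot_iff_exists.mp hdb
      push_neg at hb
      obtain ⟨m, hm, hlt⟩ := hb γ
      exact ⟨(m : Zmax), hm, by exact_mod_cast hlt⟩

/-- **Duality**: over `ℤ_max`, the orthogonal of `ker M` is the image of `Mᵗ`. -/
lemma orthC_kerM {a b : ℕ} (M : Matrix (Fin a) (Fin b) Zmax) :
    orthC (kerM M) = imM M.transpose := by
  apply Set.Subset.antisymm
  · intro z hz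
    -- the residuated candidate `u`
    set U : Fin a → Set Zmax := fun j =>
      {d | ∃ x : Vec Zmax b, (mulVecMP M x) j ≠ ⊥ ∧ d = dotMP x z + mneg ((mulVecMP M x) j)}
      with hU
    have hglb : ∀ j : Fin a, ∃ u : Zmax,
        (¬ (U j).Nonempty → u = ⊥) ∧
        ((U j).Nonempty → (∀ d ∈ U j, u ≤ d) ∧ ∀ c : Zmax, u < c → ∃ d ∈ U j, d < c) := by
      intro j
      by_cases hne : (U j).Nonempty
      · obtain ⟨u, h1, h2⟩ := exists_glb (U j) hne
        exact ⟨u, fun h => absurd hne h, fun _ => ⟨h1, h2⟩⟩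
      · exact ⟨⊥, fun _ => rfl, fun h => absurd h hne⟩
    choose u hubot huglb using hglb
    -- main claim
    have main : ∀ x : Vec Zmax b, dotMP (mulVecMP M x) u = dotMP x z := by
      intro x
      set v := mulVecMP M x with hv
      set D := dotMP x z with hD
      apply le_antisymm
      · apply Finset.sup_le
        intro j _
        show v j + u j ≤ D
        rcases eq_or_ne (v j) ⊥ with hvj | hvjne
        · simp [hvj]
        · obtain ⟨m, hvj⟩ := WithBot.ne_bot_iff_exists.mp hvjne
          have hne : (U j).Nonempty := ⟨D + mneg (v j), x, hvjne, rfl⟩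
          have hle := (huglb j hne).1 (D + mneg (v j)) ⟨x, hvjne, rfl⟩
          calc v j + u j ≤ v j + (D + mneg (v j)) := add_le_add_right hle _
            _ = D := by rw [← hvj, mneg_coe, add_comm, zcancel_neg']
      · by_contra hcon
        push_neg at hcon
        -- `hcon : dotMP v u < D`
        have hDne : D ≠ ⊥ := fun h => by rw [h] at hcon; exact not_lt_bot hcon
        obtain ⟨dlt, hdlt⟩ := WithBot.ne_bot_iff_exists.mp hDne
        -- witnesses beating the glb at every coordinate
        have key : ∀ j : Fin a, ∃ y : Vec Zmax b, v j = ⊥ ∨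
            ((mulVecMP M y) j ≠ ⊥ ∧
              dotMP y z + mneg ((mulVecMP M y) j) < D + mneg (v j)) := by
          intro j
          rcases eq_or_ne (v j) ⊥ with hvj | hvjne
          · exact ⟨fun _ => ⊥, Or.inl hvj⟩
          obtain ⟨m, hvj⟩ := WithBot.ne_bot_iff_exists.mp hvjne
          have hne : (U j).Nonempty := ⟨D + mneg (v j), x, hvjne, rfl⟩
          have hterm : v j + u j < D := lt_of_le_of_lt (by
            apply Finset.le_sup (f := fun j => v j + u j) (Finset.mem_univ j)) hcon
          have hult : u j < D + mneg (v j) := by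
            by_contra hge
            push_neg at hge
            rw [← hvj, mneg_coe] at hge
            have h2 := add_le_add_left hge (m : Zmax)
            rw [zcancel_neg'] at h2
            rw [← hvj] at hterm
            have h3 : u j + (m : Zmax) < D := by rwa [add_comm (m : Zmax)] at hterm
            exact absurd (lt_of_le_of_lt h2 h3) (lt_irrefl _)
          obtain ⟨d, ⟨y, hy1, hy2⟩, hdlt2⟩ := (huglb j hne).2 _ hult
          exact ⟨y, Or.inr ⟨hy1, by rw [← hy2]; exact hdlt2⟩⟩
        choose Y hY using key
        -- the dominating combination `w`
        set lam : Fin a → Zmax := fun j => v j + mneg ((mulVecMP M (Y j)) j) with hlam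
        set w : Vec Zmax b := fun k => Finset.univ.sup fun j => lam j + Y j k with hw
        have hsmle : ∀ j : Fin a, sm (lam j) (Y j) ≤ w := by
          intro j k
          exact Finset.le_sup (f := fun j => lam j + Y j k) (Finset.mem_univ j)
        have hMxw : mulVecMP M x ≤ mulVecMP M w := by
          intro j
          rcases eq_or_ne (v j) ⊥ with hvj | hvjne
          · show v j ≤ _
            rw [hvj]; exact bot_le
          have h1 : (mulVecMP M (sm (lam j) (Y j))) j ≤ (mulVecMP M w) j :=
            mulVec_mono M (hsmle j) j
          have h2 : (mulVecMP M (sm (lam j) (Y j))) j = v j := by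
            rw [mulVec_sm]
            show lam j + (mulVecMP M (Y j)) j = v j
            rcases hY j with hvj' | ⟨hMy, _⟩
            · exact absurd hvj' hvjne
            obtain ⟨m, hvj⟩ := WithBot.ne_bot_iff_exists.mp hvjne
            obtain ⟨m', hMy'⟩ := WithBot.ne_bot_iff_exists.mp hMy
            rw [hlam]
            show v j + mneg ((mulVecMP M (Y j)) j) + (mulVecMP M (Y j)) j = v j
            rw [← hMy', mneg_coe, zcancel_neg']
          show v j ≤ mulVecMP M w j
          rw [← h2]
          exact h1
        have hker : ((x ⊔ w, w) : Vec Zmax b × Vec Zmax b) ∈ kerM M := by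
          show mulVecMP M (x ⊔ w) = mulVecMP M w
          rw [mulVec_sup]
          exact sup_eq_right.mpr hMxw
        have heq := hz _ hker
        have hDle : D ≤ dotMP w z := by
          have : dotMP (x ⊔ w) z = dotMP x z ⊔ dotMP w z := dot_sup_left x w z
          rw [this] at heq
          rw [← heq, ← hD]
          exact le_sup_left
        have hwlt : dotMP w z < D := by
          have hrw : dotMP w z = Finset.univ.sup fun j => lam j + dotMP (Y j) z := by
            unfold dotMP
            rw [hw]
            simp only [zsup_add]
            rw [Finset.sup_comm]
            congr 1; funext j
            rw [zadd_sup]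
            congr 1; funext k
            simp [add_assoc]
          rw [hrw]
          rw [← hdlt]
          apply (Finset.sup_lt_iff (by exact WithBot.bot_lt_coe dlt)).mpr
          intro j _
          rcases hY j with hvj | ⟨hMy, hlt⟩
          · rw [hlam]
            show v j + mneg ((mulVecMP M (Y j)) j) + dotMP (Y j) z < _
            rw [hvj, WithBot.bot_add, WithBot.bot_add]
            exact WithBot.bot_lt_coe dlt
          · rcases eq_or_ne (v j) ⊥ with hvj | hvjne
            · rw [hlam]
              show v j + mneg ((mulVecMP M (Y j)) j) + dotMP (Y j) z < _
              rw [hvj, WithBot.bot_add, WithBot.bot_add]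
              exact WithBot.bot_lt_coe dlt
            obtain ⟨m, hvj⟩ := WithBot.ne_bot_iff_exists.mp hvjne
            rw [← hdlt, ← hvj] at hlt
            have := (add_coe_lt_add_coe m).mpr hlt
            rw [mneg_coe, zcancel_neg'] at this
            rw [hlam]
            show v j + mneg ((mulVecMP M (Y j)) j) + dotMP (Y j) z < _
            rw [← hvj]
            calc (m : Zmax) + mneg ((mulVecMP M (Y j)) j) + dotMP (Y j) z
                = dotMP (Y j) z + mneg ((mulVecMP M (Y j)) j) + (m : Zmax) := by
                  simp [add_comm, add_left_comm, add_assoc]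
              _ < (dlt : Zmax) := this
        exact absurd (lt_of_le_of_lt hDle hwlt) (lt_irrefl _)
    -- conclude `z = Mᵗ u`
    refine ⟨u, ?_⟩
    funext i
    have h1 := main (unitv i)
    rw [mulVec_unitv, dot_unitv'] at h1
    rw [← h1]
    unfold dotMP mulVecMP
    apply Finset.sup_congr rfl
    intro j _
    rw [Matrix.transpose_apply, add_comm]
  · rintro z ⟨x, rfl⟩ p hp
    rw [dot_swap, dot_swap, Matrix.transpose_transpose, hp]

end Aux2

section Aux3

lemma mneg_add (x y : Zmax) : mneg (x + y) = mneg x + mneg y := by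
  rcases eq_or_ne x ⊥ with rfl | hx
  · simp [mneg_bot]
  rcases eq_or_ne y ⊥ with rfl | hy
  · simp [mneg_bot]
  obtain ⟨m, rfl⟩ := WithBot.ne_bot_iff_exists.mp hx
  obtain ⟨m', rfl⟩ := WithBot.ne_bot_iff_exists.mp hy
  rw [← WithBot.coe_add, mneg_coe, mneg_coe, mneg_coe, ← WithBot.coe_add]
  rw [neg_add]

/-- pointwise negation of a vector. -/
def mnegv {c : ℕ} (x : Vec Zmax c) : Vec Zmax c := fun i => mneg (x i)

lemma mnegv_bot {c : ℕ} : mnegv (⊥ : Vec Zmax c) = ⊥ := by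
  funext i; exact mneg_bot

lemma mnegv_sm {c : ℕ} (lam : Zmax) (x : Vec Zmax c) :
    mnegv (sm lam x) = sm (mneg lam) (mnegv x) := by
  funext i; exact mneg_add lam (x i)

lemma vec_ne_bot_iff {c : ℕ} (x : Vec Zmax c) :
    x ≠ ⊥ ↔ Finset.univ.sup x ≠ ⊥ := by
  rw [not_iff_not]
  constructor
  · rintro rfl
    simp [Finset.sup_eq_bot_iff]
    try rfl
  · intro h
    funext i
    exact (Finset.sup_eq_bot_iff x Finset.univ).mp h i (Finset.mem_univ i)

lemma sup_attained {c : ℕ} (f : Fin c → Zmax) (h : Finset.univ.sup f ≠ ⊥) :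
    ∃ i, Finset.univ.sup f = f i := by
  rcases Finset.eq_empty_or_nonempty (Finset.univ : Finset (Fin c)) with he | hne
  · rw [he] at h ⊢
    exact absurd rfl h
  · obtain ⟨i, _, hi⟩ := Finset.exists_mem_eq_sup Finset.univ hne f
    exact ⟨i, hi⟩

lemma zmax_add_ne_bot {x y : Zmax} (h : x + y ≠ ⊥) : x ≠ ⊥ ∧ y ≠ ⊥ := by
  constructor <;> rintro rfl <;> simp at h

/-- **Common support**: in a finite-volume image semimodule, all nonzero
elements have the same support. -/
lemma support_eq {a b : ℕ} (M : Matrix (Fin a) (Fin b) Zmax)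
    (hfin : {z ∈ imM M | Finset.univ.sup z = (0 : Zmax)}.Finite) :
    ∀ z ∈ imM M, ∀ z' ∈ imM M, z ≠ ⊥ → ∀ j, z' j ≠ ⊥ → z j ≠ ⊥ := by
  intro z hz z' hz' hzne j hz'j
  by_contra hzj
  try rw [not_not] at hzj
  have hs := (vec_ne_bot_iff z).mp hzne
  obtain ⟨sz, hsz⟩ := WithBot.ne_bot_iff_exists.mp hs
  have hs' : Finset.univ.sup z' ≠ ⊥ := by
    intro h
    exact hz'j ((Finset.sup_eq_bot_iff z' Finset.univ).mp h j (Finset.mem_univ j))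
  obtain ⟨sz', hsz'⟩ := WithBot.ne_bot_iff_exists.mp hs'
  obtain ⟨m', hm'⟩ := WithBot.ne_bot_iff_exists.mp hz'j
  set f : ℕ → Vec Zmax a := fun t => sm ((-sz : ℤ) : Zmax) z ⊔ sm ((-sz' - 1 - t : ℤ) : Zmax) z'
    with hf
  have hmem : ∀ t : ℕ, f t ∈ {z ∈ imM M | Finset.univ.sup z = (0 : Zmax)} := by
    intro t
    constructor
    · obtain ⟨x, hx⟩ := hz
      obtain ⟨x', hx'⟩ := hz'
      exact ⟨sm ((-sz : ℤ) : Zmax) x ⊔ sm ((-sz' - 1 - t : ℤ) : Zmax) x', by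
        rw [mulVec_sup, mulVec_sm, mulVec_sm, ← hx, ← hx']⟩
    · show Finset.univ.sup (sm _ z ⊔ sm _ z') = (0 : Zmax)
      rw [Finset.sup_sup, sup_sm, sup_sm, ← hsz, ← hsz', ← WithBot.coe_add, ← WithBot.coe_add]
      have h1 : -sz + sz = 0 := by ring
      have h2 : -sz' - 1 - (t : ℤ) + sz' = -1 - t := by ring
      rw [h1, h2]
      rw [WithBot.coe_zero]
      apply sup_eq_left.mpr
      exact_mod_cast (by omega : (-1 - (t:ℤ)) ≤ 0)
  have hinj : Function.Injective f := by
    intro t t' htt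
    have := congrFun htt j
    simp only [hf, Pi.sup_apply] at this
    unfold sm at this
    rw [hzj, WithBot.add_bot, ← hm', ← WithBot.coe_add, ← WithBot.coe_add] at this
    simp only [bot_sup_eq] at this
    have h2 := WithBot.coe_injective this
    omega
  exact (Set.infinite_of_injective_forall_mem hinj hmem) hfin

/-- Rows meeting no nonzero element's support are identically `⊥`. -/
lemma row_bot {a b : ℕ} (M : Matrix (Fin a) (Fin b) Zmax)
    (hfin : {z ∈ imM M | Finset.univ.sup z = (0 : Zmax)}.Finite)
    {z : Vec Zmax a} (hz : z ∈ imM M) (hzne : z ≠ ⊥) {j : Fin a} (hzj : z j = ⊥) :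
    ∀ k, M j k = ⊥ := by
  intro k
  by_contra hMjk
  have hcol : (fun j' => M j' k) ∈ imM M := ⟨unitv k, (mulVec_unitv M k).symm⟩
  exact (support_eq M hfin z hz _ hcol hzne j hMjk) hzj

end Aux3

section Aux4

lemma zcoe_add (m m' : ℤ) : (m : Zmax) + (m' : Zmax) = ((m + m' : ℤ) : Zmax) :=
  (WithBot.coe_add m m').symm

lemma vec_ne_bot_of_coord {c : ℕ} {x : Vec Zmax c} {i : Fin c} (h : x i ≠ ⊥) : x ≠ ⊥ := by
  intro hx
  rw [hx] at h
  exact h rfl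

lemma rho_sigma {a b : ℕ} (M : Matrix (Fin a) (Fin b) Zmax)
    (hfin : {z ∈ imM M | Finset.univ.sup z = (0 : Zmax)}.Finite)
    {t : Vec Zmax b} (ht : t ∈ imM M.transpose) (htne : t ≠ ⊥) :
    mulVecMP M.transpose (mnegv (mulVecMP M (mnegv t))) = t := by
  obtain ⟨u, hu⟩ := ht
  set s : Vec Zmax a := mulVecMP M (mnegv t) with hsdef
  have hsj_ge : ∀ (j : Fin a) (k : Fin b), M j k + mneg (t k) ≤ s j := by
    intro j k
    rw [hsdef]
    exact Finset.le_sup (f := fun k' => M j k' + mnegv t k') (Finset.mem_univ k)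
  have htk_ge : ∀ (k : Fin b) (j : Fin a), M j k + u j ≤ t k := by
    intro k j
    rw [hu]
    exact Finset.le_sup (f := fun j' => M.transpose k j' + u j') (Finset.mem_univ j)
  funext k
  show Finset.univ.sup (fun j => M.transpose k j + mnegv s j) = t k
  apply le_antisymm
  · apply Finset.sup_le
    intro j _
    show M.transpose k j + mneg (s j) ≤ t k
    rw [Matrix.transpose_apply]
    rcases eq_or_ne (s j) ⊥ with hsj | hsjne
    · rw [hsj, mneg_bot, WithBot.add_bot]; exact bot_le
    rcases eq_or_ne (M j k) ⊥ with hMjk | hMjkne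
    · rw [hMjk, WithBot.bot_add]; exact bot_le
    rcases eq_or_ne (t k) ⊥ with htk | htkne
    · -- the support argument: `t` would be `⊥`
      exfalso
      apply htne
      have hcolk : (fun j' => M j' k) ∈ imM M := ⟨unitv k, (mulVec_unitv M k).symm⟩
      have hcolkne : (fun j' => M j' k) ≠ (⊥ : Vec Zmax a) := vec_ne_bot_of_coord (i := j) hMjkne
      have hubot : ∀ j', M j' k ≠ ⊥ → u j' = ⊥ := by
        intro j' hMj'k
        have h1 := htk_ge k j'
        rw [htk] at h1
        have h2 : M j' k + u j' = ⊥ := le_bot_iff.mp h1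
        rcases WithBot.add_eq_bot.mp h2 with h | h
        · exact absurd h hMj'k
        · exact h
      funext k''
      rw [hu]
      show Finset.univ.sup (fun j' => M.transpose k'' j' + u j') = ⊥
      rw [Finset.sup_eq_bot_iff]
      intro j' _
      rw [Matrix.transpose_apply]
      rcases eq_or_ne (M j' k'') ⊥ with h | h
      · rw [h, WithBot.bot_add]
      · have hcolk'' : (fun j'' => M j'' k'') ∈ imM M := ⟨unitv k'', (mulVec_unitv M k'').symm⟩
        have : M j' k ≠ ⊥ :=
          support_eq M hfin _ hcolk _ hcolk'' hcolkne j' h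
        rw [hubot j' this, WithBot.add_bot]
    -- main case: everything finite
    obtain ⟨e, he⟩ := WithBot.ne_bot_iff_exists.mp hMjkne
    obtain ⟨c, hc⟩ := WithBot.ne_bot_iff_exists.mp htkne
    obtain ⟨sj, hsj⟩ := WithBot.ne_bot_iff_exists.mp hsjne
    have h1 := hsj_ge j k
    rw [← hc, ← he, mneg_coe, ← hsj, zcoe_add] at h1
    have h2 : e + -c ≤ sj := WithBot.coe_le_coe.mp h1
    rw [← he, ← hsj, ← hc, mneg_coe, zcoe_add]
    exact WithBot.coe_le_coe.mpr (by omega)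
  · rcases eq_or_ne (t k) ⊥ with htk | htkne
    · rw [htk]; exact bot_le
    obtain ⟨c, hc⟩ := WithBot.ne_bot_iff_exists.mp htkne
    have htk2 : t k = Finset.univ.sup (fun j => M.transpose k j + u j) := by
      rw [hu]; rfl
    have hattain : Finset.univ.sup (fun j => M.transpose k j + u j) ≠ ⊥ := by
      rw [← htk2]; exact htkne
    obtain ⟨js, hjs⟩ := sup_attained _ hattain
    have htkeq : t k = M js k + u js := by
      rw [htk2, hjs, Matrix.transpose_apply]
    have hne2 : M js k + u js ≠ ⊥ := by rw [← htkeq]; exact htkne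
    obtain ⟨hMne, hune⟩ := zmax_add_ne_bot hne2
    obtain ⟨e, he⟩ := WithBot.ne_bot_iff_exists.mp hMne
    obtain ⟨f, hf⟩ := WithBot.ne_bot_iff_exists.mp hune
    have hcef : c = e + f := by
      rw [← he, ← hf, zcoe_add] at htkeq
      rw [← hc] at htkeq
      exact WithBot.coe_injective htkeq
    -- `s js = -f`
    have claim1 : s js ≤ ((-f : ℤ) : Zmax) := by
      rw [hsdef]
      apply Finset.sup_le
      intro k' _
      show M js k' + mneg (t k') ≤ _
      rcases eq_or_ne (t k') ⊥ with htk' | htk'ne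
      · rw [htk', mneg_bot, WithBot.add_bot]; exact bot_le
      rcases eq_or_ne (M js k') ⊥ with hM' | hM'ne
      · rw [hM', WithBot.bot_add]; exact bot_le
      obtain ⟨g, hg⟩ := WithBot.ne_bot_iff_exists.mp htk'ne
      obtain ⟨e', he'⟩ := WithBot.ne_bot_iff_exists.mp hM'ne
      have h3 := htk_ge k' js
      rw [← hg, ← he', ← hf, zcoe_add] at h3
      have h4 : e' + f ≤ g := WithBot.coe_le_coe.mp h3
      rw [← he', ← hg, mneg_coe, zcoe_add]
      exact WithBot.coe_le_coe.mpr (by omega)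
    have claim2 : ((-f : ℤ) : Zmax) ≤ s js := by
      have h5 := hsj_ge js k
      rw [← hc, ← he, mneg_coe, zcoe_add] at h5
      have : ((-f : ℤ) : Zmax) = ((e + -c : ℤ) : Zmax) := by
        congr 1; omega
      rw [this]
      exact h5
    have hsjs : s js = ((-f : ℤ) : Zmax) := le_antisymm claim1 claim2
    calc t k = M js k + u js := htkeq
      _ = M.transpose k js + mneg (s js) := by
          rw [Matrix.transpose_apply, hsjs, mneg_coe, neg_neg, hf]
      _ ≤ _ := Finset.le_sup (f := fun j => M.transpose k j + mnegv s j) (Finset.mem_univ js)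

def sigM {a b : ℕ} (M : Matrix (Fin a) (Fin b) Zmax) (t : Vec Zmax b) : Vec Zmax a :=
  mulVecMP M (mnegv t)

noncomputable def iotaM {a b : ℕ} (M : Matrix (Fin a) (Fin b) Zmax) (t : Vec Zmax b) :
    Vec Zmax a :=
  sm (mneg (Finset.univ.sup (sigM M t))) (sigM M t)

lemma zcoe_sub (m m' : ℤ) : (m : Zmax) + ((-m' : ℤ) : Zmax) = ((m - m' : ℤ) : Zmax) := by
  rw [zcoe_add, sub_eq_add_neg]

/-- **Volume comparison**: the volume of `Mᵗ` is at most that of `M`. -/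
lemma vol_transpose {a b : ℕ} (M : Matrix (Fin a) (Fin b) Zmax)
    (hfin : {z ∈ imM M | Finset.univ.sup z = (0 : Zmax)}.Finite) :
    {t ∈ imM M.transpose | Finset.univ.sup t = (0 : Zmax)}.Finite ∧
    {t ∈ imM M.transpose | Finset.univ.sup t = (0 : Zmax)}.ncard ≤
      {z ∈ imM M | Finset.univ.sup z = (0 : Zmax)}.ncard := by
  classical
  set S := {z ∈ imM M | Finset.univ.sup z = (0 : Zmax)} with hS
  set T := {t ∈ imM M.transpose | Finset.univ.sup t = (0 : Zmax)} with hT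
  have hbasic : ∀ t ∈ T, ∃ m : ℤ, Finset.univ.sup (sigM M t) = (m : Zmax) ∧
      iotaM M t = sm ((-m : ℤ) : Zmax) (sigM M t) ∧ sigM M t ∈ imM M ∧ t ≠ ⊥ := by
    intro t htT
    obtain ⟨htim, htsup⟩ := htT
    have htne : t ≠ ⊥ := by
      rw [vec_ne_bot_iff, htsup]
      simp
    have hsim : sigM M t ∈ imM M := ⟨mnegv t, rfl⟩
    have hsne : sigM M t ≠ ⊥ := by
      intro h
      apply htne
      rw [← rho_sigma M hfin htim htne]
      show mulVecMP M.transpose (mnegv (sigM M t)) = ⊥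
      rw [h, mnegv_bot, mulVec_bot]
    obtain ⟨m, hm⟩ := WithBot.ne_bot_iff_exists.mp ((vec_ne_bot_iff _).mp hsne)
    refine ⟨m, hm.symm, ?_, hsim, htne⟩
    show sm (mneg (Finset.univ.sup (sigM M t))) (sigM M t) = _
    rw [← hm, mneg_coe]
  have hmaps : ∀ t ∈ T, iotaM M t ∈ S := by
    intro t htT
    obtain ⟨m, hm, hieq, hsim, _⟩ := hbasic t htT
    constructor
    · rw [hieq]
      exact semimodule_sm (imM_semimodule M) hsim _
    · rw [hieq]
      show Finset.univ.sup (sm _ (sigM M t)) = (0 : Zmax)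
      rw [sup_sm, hm, zcoe_add]
      norm_num
  have hinj : Set.InjOn (iotaM M) T := by
    intro t1 ht1 t2 ht2 heq
    obtain ⟨m1, hm1, hieq1, hsim1, htne1⟩ := hbasic t1 ht1
    obtain ⟨m2, hm2, hieq2, hsim2, htne2⟩ := hbasic t2 ht2
    have hs12 : sigM M t1 = sm ((m1 - m2 : ℤ) : Zmax) (sigM M t2) := by
      have h2 : sm ((m1 : ℤ) : Zmax) (iotaM M t1) = sm ((m1 : ℤ) : Zmax) (iotaM M t2) := by
        rw [heq]
      rw [hieq1, hieq2, sm_sm, sm_sm, zcoe_sub, sub_self, WithBot.coe_zero, sm_zero,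
        zcoe_sub] at h2
      exact h2
    have hrho1 : mulVecMP M.transpose (mnegv (sigM M t1)) = t1 :=
      rho_sigma M hfin ht1.1 htne1
    have hrho2 : mulVecMP M.transpose (mnegv (sigM M t2)) = t2 :=
      rho_sigma M hfin ht2.1 htne2
    have ht12 : t1 = sm ((m2 - m1 : ℤ) : Zmax) t2 := by
      rw [← hrho1, hs12, mnegv_sm, mneg_coe, mulVec_sm, hrho2, neg_sub]
    have hsup12 : (0 : Zmax) = ((m2 - m1 : ℤ) : Zmax) + (0 : Zmax) := by
      conv_lhs => rw [← ht1.2]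
      rw [ht12, sup_sm, ht2.2]
    rw [add_zero] at hsup12
    have hm12 : m2 - m1 = 0 := by
      have h3 : ((m2 - m1 : ℤ) : Zmax) = ((0 : ℤ) : Zmax) := by
        rw [← hsup12, WithBot.coe_zero]
      have := WithBot.coe_injective h3
      omega
    rw [ht12, hm12, WithBot.coe_zero, sm_zero]
  have himg : iotaM M '' T ⊆ S := by
    rintro _ ⟨t, htT, rfl⟩
    exact hmaps t htT
  have hTfin : T.Finite := Set.Finite.of_finite_image (hfin.subset himg) hinj
  exact ⟨hTfin, Set.ncard_le_ncard_of_injOn (iotaM M) hmaps hinj hfin⟩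

end Aux4

section Aux5

lemma dot_sm_right {n : ℕ} (c : Zmax) (x z : Vec Zmax n) :
    dotMP x (sm c z) = c + dotMP x z := by
  rw [dot_comm, dot_sm_left, dot_comm]

lemma dot_mulVec_left {n : ℕ} (A : Matrix (Fin n) (Fin n) Zmax) (x z : Vec Zmax n) :
    dotMP (mulVecMP A x) z = dotMP x (mulVecMP A.transpose z) := by
  rw [dot_comm, dot_swap, dot_comm]

lemma orthS_imM {n m : ℕ} (G : Matrix (Fin n) (Fin m) Zmax) :
    orthS (imM G) = kerM G.transpose := by
  ext p
  constructor
  · intro h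
    show mulVecMP G.transpose p.1 = mulVecMP G.transpose p.2
    funext k
    have h1 := h (mulVecMP G (unitv k)) ⟨unitv k, rfl⟩
    rw [dot_swap, dot_swap, dot_unitv, dot_unitv] at h1
    exact h1
  · rintro h z ⟨w, rfl⟩
    rw [dot_swap, dot_swap]
    show dotMP (mulVecMP G.transpose p.1) w = dotMP (mulVecMP G.transpose p.2) w
    rw [h]

lemma sup_split {a b : ℕ} (f : Fin (a + b) → Zmax) :
    Finset.univ.sup f =
      (Finset.univ.sup fun i : Fin a => f (Fin.castAdd b i)) ⊔
      (Finset.univ.sup fun i : Fin b => f (Fin.natAdd a i)) := by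
  apply le_antisymm
  · apply Finset.sup_le
    intro i _
    refine Fin.addCases (motive := fun i => f i ≤ _) ?_ ?_ i
    · intro i1
      exact le_sup_of_le_left (Finset.le_sup (f := fun i : Fin a => f (Fin.castAdd b i))
        (Finset.mem_univ i1))
    · intro i2
      exact le_sup_of_le_right (Finset.le_sup (f := fun i : Fin b => f (Fin.natAdd a i))
        (Finset.mem_univ i2))
  · apply sup_le <;> apply Finset.sup_le <;> intro i _ <;>
      exact Finset.le_sup (f := f) (Finset.mem_univ _)

/-- vertical stacking of two matrices. -/
def stackM {m1 m2 n : ℕ} (D : Matrix (Fin m1) (Fin n) Zmax) (C : Matrix (Fin m2) (Fin n) Zmax) :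
    Matrix (Fin (m1 + m2)) (Fin n) Zmax :=
  Matrix.of fun i j => Fin.addCases (fun i1 => D i1 j) (fun i2 => C i2 j) i

lemma stackM_left {m1 m2 n : ℕ} (D : Matrix (Fin m1) (Fin n) Zmax)
    (C : Matrix (Fin m2) (Fin n) Zmax) (i : Fin m1) (j : Fin n) :
    stackM D C (Fin.castAdd m2 i) j = D i j := by
  unfold stackM
  simp

lemma stackM_right {m1 m2 n : ℕ} (D : Matrix (Fin m1) (Fin n) Zmax)
    (C : Matrix (Fin m2) (Fin n) Zmax) (i : Fin m2) (j : Fin n) :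
    stackM D C (Fin.natAdd m1 i) j = C i j := by
  unfold stackM
  simp

lemma mulVec_stack_left {m1 m2 n : ℕ} (D : Matrix (Fin m1) (Fin n) Zmax)
    (C : Matrix (Fin m2) (Fin n) Zmax) (x : Vec Zmax n) (i : Fin m1) :
    mulVecMP (stackM D C) x (Fin.castAdd m2 i) = mulVecMP D x i := by
  unfold mulVecMP
  apply Finset.sup_congr rfl
  intro k _
  rw [stackM_left]

lemma mulVec_stack_right {m1 m2 n : ℕ} (D : Matrix (Fin m1) (Fin n) Zmax)
    (C : Matrix (Fin m2) (Fin n) Zmax) (x : Vec Zmax n) (i : Fin m2) :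
    mulVecMP (stackM D C) x (Fin.natAdd m1 i) = mulVecMP C x i := by
  unfold mulVecMP
  apply Finset.sup_congr rfl
  intro k _
  rw [stackM_right]

lemma kerM_stack {m1 m2 n : ℕ} (D : Matrix (Fin m1) (Fin n) Zmax)
    (C : Matrix (Fin m2) (Fin n) Zmax) :
    kerM (stackM D C) = kerM D ∩ kerM C := by
  ext p
  constructor
  · intro h
    constructor
    · funext i
      have := congrFun h (Fin.castAdd m2 i)
      rwa [mulVec_stack_left, mulVec_stack_left] at this
    · funext i
      have := congrFun h (Fin.natAdd m1 i)
      rwa [mulVec_stack_right, mulVec_stack_right] at this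
  · rintro ⟨h1, h2⟩
    funext i
    refine Fin.addCases (motive := fun i => mulVecMP (stackM D C) p.1 i =
      mulVecMP (stackM D C) p.2 i) ?_ ?_ i
    · intro i1
      rw [mulVec_stack_left, mulVec_stack_left]
      exact congrFun h1 i1
    · intro i2
      rw [mulVec_stack_right, mulVec_stack_right]
      exact congrFun h2 i2

lemma mulVec_stackT {m1 m2 n : ℕ} (D : Matrix (Fin m1) (Fin n) Zmax)
    (C : Matrix (Fin m2) (Fin n) Zmax) (w : Vec Zmax (m1 + m2)) :
    mulVecMP (stackM D C).transpose w =
      mulVecMP D.transpose (fun i => w (Fin.castAdd m2 i)) ⊔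
      mulVecMP C.transpose (fun i => w (Fin.natAdd m1 i)) := by
  funext j
  show Finset.univ.sup (fun i => (stackM D C).transpose j i + w i) = _
  rw [sup_split (fun i => (stackM D C).transpose j i + w i)]
  show _ = mulVecMP D.transpose _ j ⊔ mulVecMP C.transpose _ j
  congr 1
  · apply Finset.sup_congr rfl
    intro i _
    rw [Matrix.transpose_apply, stackM_left, ← Matrix.transpose_apply (M := D)]
  · apply Finset.sup_congr rfl
    intro i _
    rw [Matrix.transpose_apply, stackM_right, ← Matrix.transpose_apply (M := C)]

lemma imM_stackT {m1 m2 n : ℕ} (D : Matrix (Fin m1) (Fin n) Zmax)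
    (C : Matrix (Fin m2) (Fin n) Zmax) :
    imM (stackM D C).transpose = setSum (imM D.transpose) (imM C.transpose) := by
  ext z
  constructor
  · rintro ⟨w, rfl⟩
    exact ⟨mulVecMP D.transpose (fun i => w (Fin.castAdd m2 i)), ⟨_, rfl⟩,
      mulVecMP C.transpose (fun i => w (Fin.natAdd m1 i)), ⟨_, rfl⟩, mulVec_stackT D C w⟩
  · rintro ⟨x, ⟨u, rfl⟩, y, ⟨v, rfl⟩, rfl⟩
    refine ⟨Fin.addCases u v, ?_⟩
    rw [mulVec_stackT]
    congr 1 <;> funext i <;> simp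

/-- finite generation of a finite-volume semimodule. -/
lemma semimodule_fg {n : ℕ} (X : Set (Vec Zmax n)) (hsm : IsSemimodule X)
    (hbot : (⊥ : Vec Zmax n) ∈ X)
    (hfin : {z ∈ X | Finset.univ.sup z = (0 : Zmax)}.Finite) :
    ∃ (m : ℕ) (G : Matrix (Fin n) (Fin m) Zmax), X = imM G := by
  classical
  refine ⟨hfin.toFinset.card, Matrix.of (fun i k =>
    ((hfin.toFinset.equivFin.symm k : Vec Zmax n) i)), ?_⟩
  set e := hfin.toFinset.equivFin with he
  ext z
  constructor
  · intro hz
    rcases eq_or_ne (Finset.univ.sup z) ⊥ with hsb | hsne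
    · have hzb : z = (⊥ : Vec Zmax n) := by
        funext i
        exact (Finset.sup_eq_bot_iff z Finset.univ).mp hsb i (Finset.mem_univ i)
      exact ⟨⊥, by rw [mulVec_bot, hzb]⟩
    obtain ⟨s, hs⟩ := WithBot.ne_bot_iff_exists.mp hsne
    have hzhat : sm ((-s : ℤ) : Zmax) z ∈ {z ∈ X | Finset.univ.sup z = (0 : Zmax)} := by
      refine ⟨semimodule_sm hsm hz _, ?_⟩
      rw [sup_sm, ← hs, zcoe_add, neg_add_cancel, WithBot.coe_zero]
    set k0 := e ⟨sm ((-s : ℤ) : Zmax) z, hfin.mem_toFinset.mpr hzhat⟩ with hk0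
    refine ⟨fun k => if k = k0 then ((s : ℤ) : Zmax) else ⊥, ?_⟩
    funext i
    show z i = Finset.univ.sup fun k => _ + _
    rw [sup_single k0 _ (fun k hk => by
      show Matrix.of _ i k + _ = ⊥
      rw [if_neg hk, WithBot.add_bot])]
    show z i = Matrix.of _ i k0 + if k0 = k0 then ((s : ℤ) : Zmax) else ⊥
    rw [if_pos rfl, Matrix.of_apply, hk0, Equiv.symm_apply_apply]
    show z i = sm ((-s : ℤ) : Zmax) z i + _
    show z i = ((-s : ℤ) : Zmax) + z i + _
    rw [add_comm _ (z i), zcancel_neg' (z i) s]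
  · rintro ⟨w, rfl⟩
    have hrw : mulVecMP (Matrix.of (fun i k => ((e.symm k : Vec Zmax n) i))) w =
        Finset.univ.sup (fun k => sm (w k) ((e.symm k : Vec Zmax n))) := by
      funext i
      rw [Finset.sup_apply]
      apply Finset.sup_congr rfl
      intro k _
      show Matrix.of _ i k + w k = w k + _
      rw [add_comm]
      rfl
    rw [hrw]
    apply Finset.sup_induction
    · exact hbot
    · intro x hx y hy
      exact semimodule_sup hsm hx hy
    · intro k _
      apply semimodule_sm hsm
      have := (e.symm k).2
      rw [Set.Finite.mem_toFinset] at this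
      exact this.1

end Aux5

section Aux6

lemma sm_sup {n : ℕ} (c : Zmax) (x y : Vec Zmax n) : sm c (x ⊔ y) = sm c x ⊔ sm c y := by
  funext i
  exact add_max c (x i) (y i)

lemma orthC_semimodule {n : ℕ} (W : Set (Vec Zmax n × Vec Zmax n)) :
    IsSemimodule (orthC W) := by
  intro x hx y hy lam mu p hp
  show dotMP p.1 (sm lam x ⊔ sm mu y) = dotMP p.2 (sm lam x ⊔ sm mu y)
  rw [dot_sup_right, dot_sup_right, dot_sm_right, dot_sm_right, dot_sm_right, dot_sm_right,
    hx p hp, hy p hp]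

lemma orthC_bot {n : ℕ} (W : Set (Vec Zmax n × Vec Zmax n)) :
    (⊥ : Vec Zmax n) ∈ orthC W := by
  intro p hp
  rw [dot_bot, dot_bot]

lemma orthC_anti {n : ℕ} {W1 W2 : Set (Vec Zmax n × Vec Zmax n)} (h : W1 ⊆ W2) :
    orthC W2 ⊆ orthC W1 :=
  fun _ hz p hp => hz p (h hp)

lemma orthS_anti {n : ℕ} {X1 X2 : Set (Vec Zmax n)} (h : X1 ⊆ X2) :
    orthS X2 ⊆ orthS X1 :=
  fun _ hp z hz => hp z (h hz)

lemma setSum_semimodule {n : ℕ} {X Y : Set (Vec Zmax n)} (hX : IsSemimodule X)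
    (hY : IsSemimodule Y) : IsSemimodule (setSum X Y) := by
  rintro _ ⟨x, hx, y, hy, rfl⟩ _ ⟨x', hx', y', hy', rfl⟩ lam mu
  refine ⟨sm lam x ⊔ sm mu x', hX x hx x' hx' lam mu, sm lam y ⊔ sm mu y',
    hY y hy y' hy' lam mu, ?_⟩
  rw [sm_sup, sm_sup]
  exact sup_sup_sup_comm _ _ _ _

lemma setSum_bot {n : ℕ} {X Y : Set (Vec Zmax n)} (hX : (⊥ : Vec Zmax n) ∈ X)
    (hY : (⊥ : Vec Zmax n) ∈ Y) : (⊥ : Vec Zmax n) ∈ setSum X Y :=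
  ⟨⊥, hX, ⊥, hY, (sup_idem _).symm⟩

lemma setSum_mono_left {n : ℕ} {X X' Y : Set (Vec Zmax n)} (h : X ⊆ X') :
    setSum X Y ⊆ setSum X' Y := by
  rintro _ ⟨x, hx, y, hy, rfl⟩
  exact ⟨x, h hx, y, hy, rfl⟩

lemma invSet_semimodule {n : ℕ} (A : Matrix (Fin n) (Fin n) Zmax) {S : Set (Vec Zmax n)}
    (hS : IsSemimodule S) : IsSemimodule (invSet A S) := by
  intro x hx y hy lam mu
  show mulVecMP A (sm lam x ⊔ sm mu y) ∈ S
  rw [mulVec_sup, mulVec_sm, mulVec_sm]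
  exact hS _ hx _ hy lam mu

lemma invSet_bot {n : ℕ} (A : Matrix (Fin n) (Fin n) Zmax) {S : Set (Vec Zmax n)}
    (hS : (⊥ : Vec Zmax n) ∈ S) : (⊥ : Vec Zmax n) ∈ invSet A S := by
  show mulVecMP A ⊥ ∈ S
  rw [mulVec_bot]
  exact hS

lemma invSet_mono {n : ℕ} (A : Matrix (Fin n) (Fin n) Zmax) {S S' : Set (Vec Zmax n)}
    (h : S ⊆ S') : invSet A S ⊆ invSet A S' :=
  fun _ hx => h hx

end Aux6

/-- Let `A ∈ ℤ_max^{n×n}`, `C ∈ ℤ_max^{q×n}`, and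
`V = ker E` where `E ∈ ℤ_max^{p×n}` has finite volume (the volume of a
semimodule `K` is the cardinality of `{z ∈ K : z₁ ⊕ ⋯ ⊕ z_n = 0}`, and
`vol(E) = vol(Im E)`).  Then the set of cofinitely generated
`(C,A)`-conditioned invariant congruences containing `V` admits a minimal
element `V_fg(C,A)`; moreover, for the sequence `X_1 := K := V^⊤`,
`X_{k+1} := K ∩ (Aᵗ)⁻¹(X_k ⊕ Im Cᵗ)` (indexed from `0` below), there is an
index `r ≤ vol(E) + 1` (i.e. `r ≤ vol(E)` in the `0`-based indexing) with
`X_{r+1} = X_r` and `V_fg(C,A) = (X_r)^⊥`. -/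

theorem finite_volume_minimal_cofinitely_generated
    {n p q : ℕ} (A : Matrix (Fin n) (Fin n) Zmax) (C : Matrix (Fin q) (Fin n) Zmax)
    (E : Matrix (Fin p) (Fin n) Zmax)
    (hvol : {z ∈ imM E | Finset.univ.sup z = (0 : Zmax)}.Finite)
    (Xseq : ℕ → Set (Vec Zmax n))
    (h0 : Xseq 0 = orthC (kerM E))
    (hstep : ∀ k, Xseq (k + 1) =
      orthC (kerM E) ∩ invSet A.transpose (setSum (Xseq k) (imM C.transpose))) :
    ∃ Vfg : Set (Vec Zmax n × Vec Zmax n),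
      (∃ m : ℕ, ∃ D : Matrix (Fin m) (Fin n) Zmax, Vfg = kerM D) ∧
      CondInv C A Vfg ∧ kerM E ⊆ Vfg ∧
      (∀ W : Set (Vec Zmax n × Vec Zmax n),
        (∃ m : ℕ, ∃ D : Matrix (Fin m) (Fin n) Zmax, W = kerM D) →
        CondInv C A W → kerM E ⊆ W → Vfg ⊆ W) ∧
      ∃ r : ℕ, r ≤ {z ∈ imM E | Finset.univ.sup z = (0 : Zmax)}.ncard ∧
        Xseq (r + 1) = Xseq r ∧ Vfg = orthS (Xseq r) := by
  classical
  obtain ⟨hTfin, hTcard⟩ := vol_transpose E hvol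
  have hX0 : Xseq 0 = imM E.transpose := by rw [h0, orthC_kerM]
  -- the chain is decreasing
  have hNmono : ∀ k, Xseq (k + 1) ⊆ Xseq k := by
    intro k
    induction k with
    | zero =>
        rw [hstep 0, h0]
        exact Set.inter_subset_left
    | succ k ih =>
        calc Xseq (k + 1 + 1)
            = orthC (kerM E) ∩ invSet A.transpose (setSum (Xseq (k + 1)) (imM C.transpose)) :=
              hstep (k + 1)
          _ ⊆ orthC (kerM E) ∩ invSet A.transpose (setSum (Xseq k) (imM C.transpose)) :=
              Set.inter_subset_inter_right _ (invSet_mono _ (setSum_mono_left ih))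
          _ = Xseq (k + 1) := (hstep k).symm
  have hsub0 : ∀ k, Xseq k ⊆ Xseq 0 := by
    intro k
    induction k with
    | zero => exact subset_rfl
    | succ k ih => exact (hNmono k).trans ih
  -- each step is a semimodule containing ⊥
  have hXsm : ∀ k, IsSemimodule (Xseq k) ∧ (⊥ : Vec Zmax n) ∈ Xseq k := by
    intro k
    induction k with
    | zero =>
        rw [h0]
        exact ⟨orthC_semimodule _, orthC_bot _⟩
    | succ k ih =>
        rw [hstep k]
        constructor
        · intro x hx y hy lam mu
          exact ⟨orthC_semimodule _ x hx.1 y hy.1 lam mu,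
            invSet_semimodule _ (setSum_semimodule ih.1 (imM_semimodule _)) x hx.2 y hy.2 lam mu⟩
        · exact ⟨orthC_bot _, invSet_bot _ (setSum_bot ih.2 (imM_bot _))⟩
  -- finiteness of the volumes
  have hNsub0 : ∀ k, {z ∈ Xseq k | Finset.univ.sup z = (0 : Zmax)} ⊆
      {t ∈ imM E.transpose | Finset.univ.sup t = (0 : Zmax)} := by
    intro k z hz
    exact ⟨hX0 ▸ hsub0 k hz.1, hz.2⟩
  have hNfin : ∀ k, {z ∈ Xseq k | Finset.univ.sup z = (0 : Zmax)}.Finite :=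
    fun k => hTfin.subset (hNsub0 k)
  -- strict decrease of volumes before stabilization
  have hstrict : ∀ k, Xseq (k + 1) ≠ Xseq k →
      {z ∈ Xseq (k + 1) | Finset.univ.sup z = (0 : Zmax)}.ncard <
      {z ∈ Xseq k | Finset.univ.sup z = (0 : Zmax)}.ncard := by
    intro k hne
    obtain ⟨z, hzk, hzk1⟩ := Set.exists_of_ssubset (ssubset_of_subset_of_ne (hNmono k) hne)
    have hzne : z ≠ ⊥ := fun h => hzk1 (h ▸ (hXsm (k + 1)).2)
    obtain ⟨s, hs⟩ := WithBot.ne_bot_iff_exists.mp ((vec_ne_bot_iff z).mp hzne)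
    have hzh_k : sm ((-s : ℤ) : Zmax) z ∈ {z ∈ Xseq k | Finset.univ.sup z = (0 : Zmax)} := by
      refine ⟨semimodule_sm (hXsm k).1 hzk _, ?_⟩
      rw [sup_sm, ← hs, zcoe_add, neg_add_cancel, WithBot.coe_zero]
    have hzh_not : sm ((-s : ℤ) : Zmax) z ∉
        {z ∈ Xseq (k + 1) | Finset.univ.sup z = (0 : Zmax)} := by
      intro hmem
      apply hzk1
      have h2 : sm ((s : ℤ) : Zmax) (sm ((-s : ℤ) : Zmax) z) ∈ Xseq (k + 1) :=
        semimodule_sm (hXsm (k + 1)).1 hmem.1 _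
      rwa [sm_sm, zcoe_add, add_neg_cancel, WithBot.coe_zero, sm_zero] at h2
    apply Set.ncard_lt_ncard _ (hNfin k)
    constructor
    · intro w hw
      exact ⟨hNmono k hw.1, hw.2⟩
    · intro hcon
      exact hzh_not (hcon hzh_k)
  -- stabilization within the volume bound
  have hstab : ∃ r, r ≤ {z ∈ imM E | Finset.univ.sup z = (0 : Zmax)}.ncard ∧
      Xseq (r + 1) = Xseq r := by
    by_contra hcon
    push_neg at hcon
    set B := {z ∈ imM E | Finset.univ.sup z = (0 : Zmax)}.ncard with hB
    have hdesc : ∀ k, k ≤ B + 1 →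
        {z ∈ Xseq k | Finset.univ.sup z = (0 : Zmax)}.ncard + k ≤
        {z ∈ Xseq 0 | Finset.univ.sup z = (0 : Zmax)}.ncard := by
      intro k
      induction k with
      | zero => intro _; omega
      | succ k ih =>
          intro hk
          have h1 := ih (by omega)
          have h2 := hstrict k (hcon k (by omega))
          omega
    have h3 := hdesc (B + 1) le_rfl
    have hN0card : {z ∈ Xseq 0 | Finset.univ.sup z = (0 : Zmax)}.ncard ≤ B := by
      rw [hX0]
      exact hTcard
    omega
  obtain ⟨r, hrle, hfix⟩ := hstab
  -- finite generation of `Xseq r`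
  obtain ⟨m, G, hXG⟩ := semimodule_fg (Xseq r) (hXsm r).1 (hXsm r).2 (hNfin r)
  refine ⟨orthS (Xseq r), ⟨m, G.transpose, by rw [hXG, orthS_imM]⟩, ?_, ?_, ?_,
    r, hrle, hfix, rfl⟩
  · -- conditioned invariance
    rintro _ ⟨pq, ⟨horth, hker⟩, rfl⟩
    intro z hz
    have hz1 : z ∈ Xseq (r + 1) := hfix.symm ▸ hz
    rw [hstep r] at hz1
    obtain ⟨w, hw, _, ⟨v, rfl⟩, heq⟩ := hz1.2
    show dotMP (mulVecMP A pq.1) z = dotMP (mulVecMP A pq.2) z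
    have hC' : mulVecMP C pq.1 = mulVecMP C pq.2 := hker
    rw [dot_mulVec_left, dot_mulVec_left, heq, dot_sup_right, dot_sup_right,
      dot_swap, dot_swap, Matrix.transpose_transpose, hC', horth w hw]
  · -- contains `ker E`
    intro pq hpq z hz
    have h4 := hsub0 r hz
    rw [h0] at h4
    exact h4 pq hpq
  · -- minimality
    rintro W ⟨m', D', rfl⟩ hCI hker
    have hbase : imM D'.transpose ⊆ orthC (kerM E) := by
      intro z hz
      rw [← orthC_kerM] at hz
      exact fun pq hpq => hz pq (hker hpq)
    have hZX : ∀ k, imM D'.transpose ⊆ Xseq k := by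
      intro k
      induction k with
      | zero =>
          rw [h0]
          exact hbase
      | succ k ih =>
          intro z hz
          rw [hstep k]
          refine ⟨hbase hz, ?_⟩
          obtain ⟨u, hu⟩ := hz
          have hkey : mulVecMP A.transpose z ∈ orthC (kerM (stackM D' C)) := by
            intro pq hpq
            rw [kerM_stack] at hpq
            have hq : (mulVecMP A pq.1, mulVecMP A pq.2) ∈ kerM D' :=
              hCI ⟨pq, ⟨hpq.1, hpq.2⟩, rfl⟩
            have hq' : mulVecMP D' (mulVecMP A pq.1) = mulVecMP D' (mulVecMP A pq.2) := hq
            rw [hu, ← dot_mulVec_left, ← dot_mulVec_left, dot_swap, dot_swap,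
              Matrix.transpose_transpose, hq']
          rw [orthC_kerM, imM_stackT] at hkey
          obtain ⟨x1, hx1, y1, hy1, heq⟩ := hkey
          exact ⟨x1, ih hx1, y1, hy1, heq⟩
    have h5 := orthS_anti (hZX r)
    rw [orthS_imM, Matrix.transpose_transpose] at h5
    exact h5
end

section
/- Let V ⊂ (ℝ_max^n)² be a congruence, A ∈ ℝ_max^{n×n}, C ∈ ℝ_max^{q×n}, and K := V^⊤. Then the set L_fg(C,A,V) of cofinitely generated (C,A)-conditioned invariant congruences containing V admits a minimal element V_fg(C,A) if and only if the set M_fg(Aᵗ,Cᵗ,K) of finitely generated (Aᵗ,Cᵗ)-controlled invariant semimodules contained in K admits a maximal element K^fg(Aᵗ,Cᵗ); and when these elements exist, V_fg(C,A) = (K^fg(Aᵗ,Cᵗ))^⊥. -/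
/-- Membership in `L_fg(C,A,V)`: cofinitely generated `(C,A)`-conditioned
invariant congruences containing `V`. -/
def memLfg {n q : ℕ} (C : Matrix (Fin q) (Fin n) Rmax) (A : Matrix (Fin n) (Fin n) Rmax)
    (V W : Set (Vec Rmax n × Vec Rmax n)) : Prop :=
  (∃ m : ℕ, ∃ D : Matrix (Fin m) (Fin n) Rmax, W = kerM D) ∧ CondInv C A W ∧ V ⊆ W

/-- Membership in `M_fg(Aᵗ,Cᵗ,K)`: finitely generated `(Aᵗ,Cᵗ)`-controlled
invariant semimodules contained in `K`. -/
def memMfg {n q : ℕ} (A : Matrix (Fin n) (Fin n) Rmax) (C : Matrix (Fin q) (Fin n) Rmax)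
    (K X : Set (Vec Rmax n)) : Prop :=
  (∃ m : ℕ, ∃ D : Matrix (Fin n) (Fin m) Rmax, X = imM D) ∧
    ContrInv A.transpose C.transpose X ∧ X ⊆ K


/-! ### Auxiliary lemmas for the proof -/

namespace MPDual

open Finset

lemma rsup_add (a b c : Rmax) : a + (b ⊔ c) = (a + b) ⊔ (a + c) := by
  rcases le_total b c with h | h
  · rw [sup_eq_right.mpr h, sup_eq_right.mpr (add_le_add_right h a)]
  · rw [sup_eq_left.mpr h, sup_eq_left.mpr (add_le_add_right h a)]

lemma radd_sup (a b c : Rmax) : (b ⊔ c) + a = (b + a) ⊔ (c + a) := by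
  rw [add_comm, rsup_add, add_comm b a, add_comm c a]

lemma finsup_add {ι : Type*} (s : Finset ι) (f : ι → Rmax) (c : Rmax) :
    s.sup f + c = s.sup fun i => f i + c := by
  induction s using Finset.cons_induction with
  | empty => simp [WithBot.bot_add]
  | cons a s ha ih => rw [Finset.sup_cons, Finset.sup_cons, radd_sup, ih]

lemma add_finsup {ι : Type*} (s : Finset ι) (f : ι → Rmax) (c : Rmax) :
    c + s.sup f = s.sup fun i => c + f i := by
  induction s using Finset.cons_induction with
  | empty => simp [WithBot.add_bot]
  | cons a s ha ih => rw [Finset.sup_cons, Finset.sup_cons, rsup_add, ih]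

lemma finsup_sup {ι : Type*} (s : Finset ι) (f g : ι → Rmax) :
    s.sup (fun i => f i ⊔ g i) = s.sup f ⊔ s.sup g := by
  induction s using Finset.cons_induction with
  | empty => simp
  | cons a s ha ih =>
      rw [Finset.sup_cons, Finset.sup_cons, Finset.sup_cons, ih]
      ac_rfl

lemma dot_comm {n : ℕ} (u v : Vec Rmax n) : dotMP u v = dotMP v u := by
  unfold dotMP
  apply Finset.sup_congr rfl
  intro i _
  exact add_comm _ _

lemma dot_adj {p n : ℕ} (B : Matrix (Fin p) (Fin n) Rmax) (x : Vec Rmax n) (w : Vec Rmax p) :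
    dotMP (mulVecMP B x) w = dotMP x (mulVecMP B.transpose w) := by
  unfold dotMP mulVecMP
  calc univ.sup (fun i => (univ.sup fun k => B i k + x k) + w i)
      = univ.sup (fun i => univ.sup fun k => (B i k + x k) + w i) := by
        apply Finset.sup_congr rfl; intro i _; exact finsup_add _ _ _
    _ = univ.sup (fun k => univ.sup fun i => (B i k + x k) + w i) := Finset.sup_comm _ _ _
    _ = univ.sup (fun k => x k + univ.sup fun i => B.transpose k i + w i) := by
        apply Finset.sup_congr rfl; intro k _
        rw [add_finsup]
        apply Finset.sup_congr rfl; intro i _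
        rw [Matrix.transpose_apply, add_comm (B i k) (x k), add_assoc]

lemma dot_sup_left {n : ℕ} (x y z : Vec Rmax n) :
    dotMP (x ⊔ y) z = dotMP x z ⊔ dotMP y z := by
  unfold dotMP
  rw [← finsup_sup]
  apply Finset.sup_congr rfl
  intro i _
  rw [Pi.sup_apply, radd_sup]

lemma dot_sup_right {n : ℕ} (x y z : Vec Rmax n) :
    dotMP x (y ⊔ z) = dotMP x y ⊔ dotMP x z := by
  rw [dot_comm, dot_sup_left, dot_comm y x, dot_comm z x]

lemma mulVec_sup {p n : ℕ} (E : Matrix (Fin p) (Fin n) Rmax) (x y : Vec Rmax n) :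
    mulVecMP E (x ⊔ y) = mulVecMP E x ⊔ mulVecMP E y := by
  funext i
  show _ = mulVecMP E x i ⊔ mulVecMP E y i
  unfold mulVecMP
  rw [← finsup_sup]
  apply Finset.sup_congr rfl
  intro j _
  rw [Pi.sup_apply, rsup_add]

/-- Scaled unit vector: `c` at position `k`, `⊥` elsewhere. -/
def unitS {n : ℕ} (c : Rmax) (k : Fin n) : Vec Rmax n := fun j => if j = k then c else ⊥

lemma dot_unitS {n : ℕ} (c : Rmax) (k : Fin n) (z : Vec Rmax n) :
    dotMP (unitS c k) z = c + z k := by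
  unfold dotMP unitS
  apply le_antisymm
  · apply Finset.sup_le
    intro j _
    by_cases h : j = k
    · subst h; simp
    · simp [h, WithBot.bot_add]
  · have := Finset.le_sup (f := fun j => (if j = k then c else ⊥) + z j) (Finset.mem_univ k)
    simpa using this

lemma mulVec_unitS {p n : ℕ} (E : Matrix (Fin p) (Fin n) Rmax) (c : Rmax) (k : Fin n) (i : Fin p) :
    mulVecMP E (unitS c k) i = E i k + c := by
  unfold mulVecMP unitS
  apply le_antisymm
  · apply Finset.sup_le
    intro j _
    by_cases h : j = k
    · subst h; simp
    · simp [h, WithBot.add_bot]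
  · have := Finset.le_sup (f := fun j => E i j + (if j = k then c else ⊥)) (Finset.mem_univ k)
    simpa using this

lemma add_map_sub (e : ℝ) (a : Rmax) :
    (e : Rmax) + WithBot.map (fun t => t - e) a = a := by
  induction a using WithBot.recBotCoe with
  | bot => rw [WithBot.map_bot, WithBot.add_bot]
  | coe x => rw [WithBot.map_coe, ← WithBot.coe_add]; norm_num

lemma bot_lt_zero : (⊥ : Rmax) < 0 := by
  exact_mod_cast WithBot.bot_lt_coe (0 : ℝ)

/-- **Key duality**: the orthogonal of the kernel of a matrix is the image of
its transpose. -/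
lemma orthC_ker {p n : ℕ} (E : Matrix (Fin p) (Fin n) Rmax) :
    orthC (kerM E) = imM E.transpose := by
  apply Set.Subset.antisymm
  · intro z hz
    classical
    set r : Fin p → Fin n → WithTop Rmax := fun i k =>
      if h : E i k = ⊥ then ⊤
      else ((WithBot.map (fun t => t - (E i k).unbot h) (z k) : Rmax) : WithTop Rmax)
      with hr
    set v : Vec Rmax p := fun i => WithTop.untopD ⊥ (Finset.univ.inf (r i)) with hv
    refine ⟨v, ?_⟩
    funext k
    apply le_antisymm
    · -- hard direction : z k ≤ (Eᵗ v) k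
      by_contra hcon
      rw [not_le] at hcon
      have hzkb : z k ≠ ⊥ := by
        intro hb
        rw [hb] at hcon
        exact absurd hcon (not_lt_bot)
      obtain ⟨zk, hzk⟩ := WithBot.ne_bot_iff_exists.mp hzkb
      have key : ∀ i : Fin p, ∃ (kk : Fin n) (lam : ℝ), E i k ≠ ⊥ →
          ((lam : Rmax) + z kk < 0 ∧ E i k + ((-zk : ℝ) : Rmax) < E i kk + (lam : Rmax)) := by
        intro i
        by_cases hik : E i k = ⊥
        · exact ⟨k, 0, fun h => absurd hik h⟩
        · have hcon' : Finset.univ.sup (fun i' => E.transpose k i' + v i') < z k := hcon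
          have hterm : E.transpose k i + v i < z k :=
            lt_of_le_of_lt
              (Finset.le_sup (f := fun i' => E.transpose k i' + v i') (Finset.mem_univ i)) hcon'
          rw [Matrix.transpose_apply] at hterm
          set e : ℝ := (E i k).unbot hik with he
          have hEik : E i k = (e : Rmax) := (WithBot.coe_unbot _ hik).symm
          have h1 : v i < ((zk - e : ℝ) : Rmax) := by
            by_contra h2
            rw [not_lt] at h2
            have h3 : z k ≤ E i k + v i := by
              rw [hEik, ← hzk]
              calc ((zk : ℝ) : Rmax) = (e : Rmax) + ((zk - e : ℝ) : Rmax) := by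
                    rw [← WithBot.coe_add]; norm_num
                _ ≤ (e : Rmax) + v i := add_le_add_right h2 _
            exact absurd h3 (not_le.mpr hterm)
          have hVne : Finset.univ.inf (r i) ≠ ⊤ := by
            intro htop
            have h4 := (Finset.inf_eq_top_iff _ _).mp htop k (Finset.mem_univ k)
            simp only [hr] at h4
            rw [dif_neg hik] at h4
            exact WithTop.coe_ne_top h4
          obtain ⟨Vi, hVi⟩ := WithTop.ne_top_iff_exists.mp hVne
          have hvVi : v i = Vi := by
            rw [hv]
            show WithTop.untopD ⊥ (Finset.univ.inf (r i)) = Vi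
            rw [← hVi, WithTop.untopD_coe]
          have hinf_lt : Finset.univ.inf (r i) < (((zk - e : ℝ) : Rmax) : WithTop Rmax) := by
            rw [← hVi]
            exact WithTop.coe_lt_coe.mpr (hvVi ▸ h1)
          obtain ⟨k', _, hk'⟩ := Finset.inf_lt_iff.mp hinf_lt
          have hik' : E i k' ≠ ⊥ := by
            intro hb
            simp only [hr] at hk'
            rw [dif_pos hb] at hk'
            exact absurd hk' not_top_lt
          set e' : ℝ := (E i k').unbot hik' with he'
          have hEik' : E i k' = (e' : Rmax) := (WithBot.coe_unbot _ hik').symm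
          have hmap : WithBot.map (fun t => t - e') (z k') < ((zk - e : ℝ) : Rmax) := by
            simp only [hr] at hk'
            rw [dif_neg hik', ← he'] at hk'
            exact WithTop.coe_lt_coe.mp hk'
          by_cases hzb : z k' = ⊥
          · refine ⟨k', e - zk - e' + 1, fun _ => ⟨?_, ?_⟩⟩
            · rw [hzb, WithBot.add_bot]; exact bot_lt_zero
            · rw [hEik, hEik', ← WithBot.coe_add, ← WithBot.coe_add, WithBot.coe_lt_coe]
              linarith
          · obtain ⟨c, hc⟩ := WithBot.ne_bot_iff_exists.mp hzb
            have hce : c - e' < zk - e := by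
              rw [← hc, WithBot.map_coe, WithBot.coe_lt_coe] at hmap
              exact hmap
            refine ⟨k', (e - zk - e' + (-c)) / 2, fun _ => ⟨?_, ?_⟩⟩
            · rw [← hc, ← WithBot.coe_add]
              have : ((e - zk - e' + (-c)) / 2 + c : ℝ) < 0 := by linarith
              exact_mod_cast this
            · rw [hEik, hEik', ← WithBot.coe_add, ← WithBot.coe_add, WithBot.coe_lt_coe]
              linarith
      choose kk lam hkey using key
      set x : Vec Rmax n := fun j =>
        Finset.univ.sup (fun i : Fin p => if kk i = j ∧ E i k ≠ ⊥ then (lam i : Rmax) else ⊥)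
        with hx
      have hdotx : dotMP x z < 0 := by
        unfold dotMP
        apply (Finset.sup_lt_iff bot_lt_zero).mpr
        intro j _
        rw [hx]
        show Finset.univ.sup _ + z j < 0
        rw [finsup_add]
        apply (Finset.sup_lt_iff bot_lt_zero).mpr
        intro i _
        by_cases hc : kk i = j ∧ E i k ≠ ⊥
        · rw [if_pos hc]
          rw [← hc.1]
          exact (hkey i hc.2).1
        · rw [if_neg hc, WithBot.bot_add]
          exact bot_lt_zero
      have hEle : mulVecMP E (unitS ((-zk : ℝ) : Rmax) k) ≤ mulVecMP E x := by
        intro i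
        rw [mulVec_unitS]
        by_cases hik : E i k = ⊥
        · rw [hik, WithBot.bot_add]; exact bot_le
        · have h2 := (hkey i hik).2
          have hxk : (lam i : Rmax) ≤ x (kk i) := by
            rw [hx]
            have := Finset.le_sup
              (f := fun i' : Fin p => if kk i' = kk i ∧ E i' k ≠ ⊥ then (lam i' : Rmax) else ⊥)
              (Finset.mem_univ i)
            simpa [hik] using this
          calc E i k + ((-zk : ℝ) : Rmax) ≤ E i (kk i) + (lam i : Rmax) := le_of_lt h2
            _ ≤ E i (kk i) + x (kk i) := add_le_add_right hxk _
            _ ≤ mulVecMP E x i :=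
                Finset.le_sup (f := fun j => E i j + x j) (Finset.mem_univ (kk i))
      have hker : (x ⊔ unitS ((-zk : ℝ) : Rmax) k, x) ∈ kerM E := by
        show mulVecMP E (x ⊔ _) = mulVecMP E x
        rw [mulVec_sup]
        exact sup_eq_left.mpr hEle
      have heq := hz _ hker
      rw [dot_sup_left, dot_unitS] at heq
      have h0 : (0 : Rmax) ≤ dotMP x z := by
        rw [← heq]
        have hz0 : ((-zk : ℝ) : Rmax) + z k = 0 := by
          rw [← hzk, ← WithBot.coe_add]
          norm_num
        rw [hz0]
        exact le_sup_right
      exact absurd h0 (not_le.mpr hdotx)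
    · -- easy direction : (Eᵗ v) k ≤ z k
      apply Finset.sup_le
      intro i _
      rw [Matrix.transpose_apply]
      by_cases hik : E i k = ⊥
      · rw [hik, WithBot.bot_add]; exact bot_le
      · set e : ℝ := (E i k).unbot hik with he
        have hEik : E i k = (e : Rmax) := (WithBot.coe_unbot _ hik).symm
        have hle : Finset.univ.inf (r i) ≤ r i k := Finset.inf_le (Finset.mem_univ k)
        have hrik : r i k = ((WithBot.map (fun t => t - e) (z k) : Rmax) : WithTop Rmax) := by
          simp only [hr]
          rw [dif_neg hik, ← he]
        by_cases htop : Finset.univ.inf (r i) = ⊤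
        · rw [htop, top_le_iff, hrik] at hle
          exact absurd hle (by simp)
        · obtain ⟨Vi, hVi⟩ := WithTop.ne_top_iff_exists.mp htop
          have hvi : v i = Vi := by
            rw [hv]
            show WithTop.untopD ⊥ (Finset.univ.inf (r i)) = Vi
            rw [← hVi, WithTop.untopD_coe]
          have h5 : (Vi : WithTop Rmax) ≤ r i k := hVi ▸ hle
          rw [hrik] at h5
          have hle2 : Vi ≤ WithBot.map (fun t => t - e) (z k) := WithTop.coe_le_coe.mp h5
          calc E i k + v i ≤ E i k + WithBot.map (fun t => t - e) (z k) := by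
                rw [hvi]; exact add_le_add_right hle2 _
            _ = z k := by rw [hEik]; exact add_map_sub e (z k)
  · rintro z ⟨v, rfl⟩ p hp
    have hp' : mulVecMP E p.1 = mulVecMP E p.2 := hp
    rw [← dot_adj E p.1 v, ← dot_adj E p.2 v, hp']

lemma orthS_im {n m : ℕ} (D : Matrix (Fin n) (Fin m) Rmax) :
    orthS (imM D) = kerM D.transpose := by
  have key : ∀ (j : Fin m) (y : Vec Rmax n),
      dotMP y (mulVecMP D (unitS 0 j)) = mulVecMP D.transpose y j := by
    intro j y
    rw [← dot_comm, dot_adj, dot_unitS, zero_add]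
  ext p
  constructor
  · intro h
    show mulVecMP D.transpose p.1 = mulVecMP D.transpose p.2
    funext j
    have h1 := h (mulVecMP D (unitS 0 j)) ⟨_, rfl⟩
    rw [key j p.1, key j p.2] at h1
    exact h1
  · rintro h z ⟨u, rfl⟩
    have h' : mulVecMP D.transpose p.1 = mulVecMP D.transpose p.2 := h
    rw [dot_comm p.1, dot_adj, dot_comm p.2, dot_adj, h']

/-- Max-plus matrix product. -/
def matMP {a b c : ℕ} (P : Matrix (Fin a) (Fin b) Rmax) (Q : Matrix (Fin b) (Fin c) Rmax) :
    Matrix (Fin a) (Fin c) Rmax := fun i j => Finset.univ.sup fun k => P i k + Q k j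

lemma mulVec_matMP {a b c : ℕ} (P : Matrix (Fin a) (Fin b) Rmax)
    (Q : Matrix (Fin b) (Fin c) Rmax) (x : Vec Rmax c) :
    mulVecMP (matMP P Q) x = mulVecMP P (mulVecMP Q x) := by
  funext i
  unfold mulVecMP matMP
  calc univ.sup (fun l => (univ.sup fun k => P i k + Q k l) + x l)
      = univ.sup (fun l => univ.sup fun k => (P i k + Q k l) + x l) := by
        apply Finset.sup_congr rfl; intro l _; exact finsup_add _ _ _
    _ = univ.sup (fun k => univ.sup fun l => (P i k + Q k l) + x l) := Finset.sup_comm _ _ _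
    _ = univ.sup (fun k => P i k + univ.sup fun l => Q k l + x l) := by
        apply Finset.sup_congr rfl; intro k _
        rw [add_finsup]
        apply Finset.sup_congr rfl; intro l _
        rw [add_assoc]

lemma transpose_matMP {a b c : ℕ} (P : Matrix (Fin a) (Fin b) Rmax)
    (Q : Matrix (Fin b) (Fin c) Rmax) :
    (matMP P Q).transpose = matMP Q.transpose P.transpose := by
  funext i j
  show matMP P Q j i = _
  unfold matMP
  apply Finset.sup_congr rfl
  intro k _
  rw [Matrix.transpose_apply, Matrix.transpose_apply, add_comm]

/-- Vertical stacking of two matrices. -/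
def stackM {m q n : ℕ} (D : Matrix (Fin m) (Fin n) Rmax) (C : Matrix (Fin q) (Fin n) Rmax) :
    Matrix (Fin (m + q)) (Fin n) Rmax :=
  fun i j => Fin.addCases (fun i' => D i' j) (fun i' => C i' j) i

lemma sup_fin_add {m q : ℕ} (f : Fin (m + q) → Rmax) :
    Finset.univ.sup f =
      (Finset.univ.sup fun i : Fin m => f (Fin.castAdd q i)) ⊔
        (Finset.univ.sup fun i : Fin q => f (Fin.natAdd m i)) := by
  apply le_antisymm
  · apply Finset.sup_le
    intro i _
    induction i using Fin.addCases with
    | left i =>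
        exact le_trans
          (Finset.le_sup (f := fun i : Fin m => f (Fin.castAdd q i)) (Finset.mem_univ i))
          le_sup_left
    | right i =>
        exact le_trans
          (Finset.le_sup (f := fun i : Fin q => f (Fin.natAdd m i)) (Finset.mem_univ i))
          le_sup_right
  · apply sup_le
    · exact Finset.sup_le fun i _ => Finset.le_sup (Finset.mem_univ _)
    · exact Finset.sup_le fun i _ => Finset.le_sup (Finset.mem_univ _)

lemma stackM_left {m q n : ℕ} (D : Matrix (Fin m) (Fin n) Rmax)
    (C : Matrix (Fin q) (Fin n) Rmax) (i : Fin m) (j : Fin n) :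
    stackM D C (Fin.castAdd q i) j = D i j := by
  unfold stackM
  rw [Fin.addCases_left]

lemma stackM_right {m q n : ℕ} (D : Matrix (Fin m) (Fin n) Rmax)
    (C : Matrix (Fin q) (Fin n) Rmax) (i : Fin q) (j : Fin n) :
    stackM D C (Fin.natAdd m i) j = C i j := by
  unfold stackM
  rw [Fin.addCases_right]

lemma mulVec_stack_cast {m q n : ℕ} (D : Matrix (Fin m) (Fin n) Rmax)
    (C : Matrix (Fin q) (Fin n) Rmax) (x : Vec Rmax n) (i : Fin m) :
    mulVecMP (stackM D C) x (Fin.castAdd q i) = mulVecMP D x i := by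
  unfold mulVecMP stackM
  apply Finset.sup_congr rfl
  intro j _
  rw [Fin.addCases_left]

lemma mulVec_stack_nat {m q n : ℕ} (D : Matrix (Fin m) (Fin n) Rmax)
    (C : Matrix (Fin q) (Fin n) Rmax) (x : Vec Rmax n) (i : Fin q) :
    mulVecMP (stackM D C) x (Fin.natAdd m i) = mulVecMP C x i := by
  unfold mulVecMP stackM
  apply Finset.sup_congr rfl
  intro j _
  rw [Fin.addCases_right]

lemma kerM_stack {m q n : ℕ} (D : Matrix (Fin m) (Fin n) Rmax)
    (C : Matrix (Fin q) (Fin n) Rmax) :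
    kerM (stackM D C) = kerM D ∩ kerM C := by
  ext p
  constructor
  · intro h
    have h' : mulVecMP (stackM D C) p.1 = mulVecMP (stackM D C) p.2 := h
    constructor
    · show mulVecMP D p.1 = mulVecMP D p.2
      funext i
      rw [← mulVec_stack_cast D C p.1 i, ← mulVec_stack_cast D C p.2 i, h']
    · show mulVecMP C p.1 = mulVecMP C p.2
      funext i
      rw [← mulVec_stack_nat D C p.1 i, ← mulVec_stack_nat D C p.2 i, h']
  · rintro ⟨h1, h2⟩
    have h1' : mulVecMP D p.1 = mulVecMP D p.2 := h1
    have h2' : mulVecMP C p.1 = mulVecMP C p.2 := h2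
    show mulVecMP (stackM D C) p.1 = mulVecMP (stackM D C) p.2
    funext i
    induction i using Fin.addCases with
    | left i => rw [mulVec_stack_cast, mulVec_stack_cast, h1']
    | right i => rw [mulVec_stack_nat, mulVec_stack_nat, h2']

lemma mulVec_stack_transpose {m q n : ℕ} (D : Matrix (Fin m) (Fin n) Rmax)
    (C : Matrix (Fin q) (Fin n) Rmax) (w : Vec Rmax (m + q)) :
    mulVecMP (stackM D C).transpose w =
      mulVecMP D.transpose (fun i => w (Fin.castAdd q i)) ⊔
        mulVecMP C.transpose (fun i => w (Fin.natAdd m i)) := by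
  funext j
  show mulVecMP (stackM D C).transpose w j = _ ⊔ _
  unfold mulVecMP
  rw [sup_fin_add (f := fun i => (stackM D C).transpose j i + w i)]
  congr 1
  · apply Finset.sup_congr rfl
    intro i _
    show (stackM D C).transpose j (Fin.castAdd q i) + w (Fin.castAdd q i) =
      D.transpose j i + w (Fin.castAdd q i)
    rw [Matrix.transpose_apply, Matrix.transpose_apply, stackM_left]
  · apply Finset.sup_congr rfl
    intro i _
    show (stackM D C).transpose j (Fin.natAdd m i) + w (Fin.natAdd m i) =
      C.transpose j i + w (Fin.natAdd m i)
    rw [Matrix.transpose_apply, Matrix.transpose_apply, stackM_right]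

lemma imM_stack {m q n : ℕ} (D : Matrix (Fin m) (Fin n) Rmax)
    (C : Matrix (Fin q) (Fin n) Rmax) :
    imM (stackM D C).transpose = setSum (imM D.transpose) (imM C.transpose) := by
  ext z
  constructor
  · rintro ⟨w, rfl⟩
    exact ⟨mulVecMP D.transpose (fun i => w (Fin.castAdd q i)), ⟨_, rfl⟩,
      mulVecMP C.transpose (fun i => w (Fin.natAdd m i)), ⟨_, rfl⟩,
      mulVec_stack_transpose D C w⟩
  · rintro ⟨xx, ⟨a, rfl⟩, yy, ⟨b, rfl⟩, rfl⟩
    refine ⟨Fin.addCases a b, ?_⟩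
    rw [mulVec_stack_transpose]
    have ha : (fun i => Fin.addCases (motive := fun _ => Rmax) a b (Fin.castAdd q i)) = a := by
      funext i; rw [Fin.addCases_left]
    have hb : (fun i => Fin.addCases (motive := fun _ => Rmax) a b (Fin.natAdd m i)) = b := by
      funext i; rw [Fin.addCases_right]
    rw [ha, hb]

lemma transfer1 {n q : ℕ} (A : Matrix (Fin n) (Fin n) Rmax) (C : Matrix (Fin q) (Fin n) Rmax)
    (X : Set (Vec Rmax n)) (hX : ContrInv A.transpose C.transpose X) :
    CondInv C A (orthS X) := by
  rintro p ⟨w, ⟨hw1, hw2⟩, rfl⟩ z hz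
  obtain ⟨w', hw', cv, ⟨u, rfl⟩, heq⟩ := hX ⟨z, hz, rfl⟩
  have hw2' : mulVecMP C w.1 = mulVecMP C w.2 := hw2
  calc dotMP (mulVecMP A w.1) z = dotMP w.1 (mulVecMP A.transpose z) := dot_adj A w.1 z
    _ = dotMP w.1 w' ⊔ dotMP w.1 (mulVecMP C.transpose u) := by rw [heq, dot_sup_right]
    _ = dotMP w.2 w' ⊔ dotMP w.2 (mulVecMP C.transpose u) := by
        rw [hw1 w' hw']
        congr 1
        rw [← dot_adj C w.1 u, ← dot_adj C w.2 u, hw2']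
    _ = dotMP w.2 (mulVecMP A.transpose z) := by rw [heq, dot_sup_right]
    _ = dotMP (mulVecMP A w.2) z := (dot_adj A w.2 z).symm

lemma transfer2 {n q m : ℕ} (A : Matrix (Fin n) (Fin n) Rmax) (C : Matrix (Fin q) (Fin n) Rmax)
    (D : Matrix (Fin m) (Fin n) Rmax) (h : CondInv C A (kerM D)) :
    ContrInv A.transpose C.transpose (imM D.transpose) := by
  rintro y ⟨z, ⟨v, rfl⟩, rfl⟩
  rw [← mulVec_matMP]
  rw [← imM_stack D C, ← orthC_ker (stackM D C)]
  intro p hp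
  rw [kerM_stack] at hp
  obtain ⟨h1, h2⟩ := hp
  have hDA : mulVecMP D (mulVecMP A p.1) = mulVecMP D (mulVecMP A p.2) :=
    h ⟨p, ⟨h1, h2⟩, rfl⟩
  have key : ∀ x : Vec Rmax n, dotMP x (mulVecMP (matMP A.transpose D.transpose) v) =
      dotMP (mulVecMP D (mulVecMP A x)) v := by
    intro x
    have h3 := dot_adj (matMP A.transpose D.transpose).transpose x v
    rw [Matrix.transpose_transpose] at h3
    rw [← h3, transpose_matMP, Matrix.transpose_transpose, Matrix.transpose_transpose,
      mulVec_matMP]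
  rw [key p.1, key p.2, hDA]

lemma galois {n : ℕ} (W : Set (Vec Rmax n × Vec Rmax n)) (X : Set (Vec Rmax n)) :
    W ⊆ orthS X ↔ X ⊆ orthC W :=
  ⟨fun h z hz p hp => h hp z hz, fun h p hp z hz => h hz p hp⟩

lemma orthC_anti {n : ℕ} {V W : Set (Vec Rmax n × Vec Rmax n)} (h : V ⊆ W) :
    orthC W ⊆ orthC V := fun z hz p hp => hz p (h hp)

lemma orthS_anti {n : ℕ} {X Y : Set (Vec Rmax n)} (h : X ⊆ Y) :
    orthS Y ⊆ orthS X := fun p hp z hz => hp z (h hz)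

lemma backward_mem {n q m : ℕ} (A : Matrix (Fin n) (Fin n) Rmax)
    (C : Matrix (Fin q) (Fin n) Rmax) (V : Set (Vec Rmax n × Vec Rmax n))
    (D : Matrix (Fin n) (Fin m) Rmax)
    (hX : ContrInv A.transpose C.transpose (imM D))
    (hsub : imM D ⊆ orthC V) : memLfg C A V (orthS (imM D)) :=
  ⟨⟨m, D.transpose, orthS_im D⟩, transfer1 A C _ hX, (galois V (imM D)).mpr hsub⟩

lemma backward_min {n q m : ℕ} (A : Matrix (Fin n) (Fin n) Rmax)
    (C : Matrix (Fin q) (Fin n) Rmax) (V : Set (Vec Rmax n × Vec Rmax n))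
    (D : Matrix (Fin n) (Fin m) Rmax)
    (hmax : ∀ X, memMfg A C (orthC V) X → X ⊆ imM D) :
    ∀ W, memLfg C A V W → orthS (imM D) ⊆ W := by
  rintro W ⟨⟨mE, E, rfl⟩, hCI, hVW⟩
  have hX' : memMfg A C (orthC V) (imM E.transpose) :=
    ⟨⟨mE, E.transpose, rfl⟩, transfer2 A C E hCI, by rw [← orthC_ker]; exact orthC_anti hVW⟩
  have h2 := orthS_anti (hmax _ hX')
  rwa [orthS_im E.transpose, Matrix.transpose_transpose] at h2

end MPDual

/-- Let `V` be a congruence on `ℝ_max^n` and `K := V^⊤`.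
Then `L_fg(C,A,V)` admits a minimal element iff `M_fg(Aᵗ,Cᵗ,K)` admits a
maximal element; and when they exist, the minimal element `V_fg(C,A)` equals
the orthogonal `(K^fg(Aᵗ,Cᵗ))^⊥` of the maximal element. -/
theorem fg_duality
    {n q : ℕ} (A : Matrix (Fin n) (Fin n) Rmax) (C : Matrix (Fin q) (Fin n) Rmax)
    (V : Set (Vec Rmax n × Vec Rmax n)) (hV : IsCongruence V) :
    ((∃ Vfg, memLfg C A V Vfg ∧ ∀ W, memLfg C A V W → Vfg ⊆ W) ↔
      (∃ Kfg, memMfg A C (orthC V) Kfg ∧ ∀ X, memMfg A C (orthC V) X → X ⊆ Kfg)) ∧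
    (∀ Vfg Kfg,
      (memLfg C A V Vfg ∧ ∀ W, memLfg C A V W → Vfg ⊆ W) →
      (memMfg A C (orthC V) Kfg ∧ ∀ X, memMfg A C (orthC V) X → X ⊆ Kfg) →
      Vfg = orthS Kfg) := by
  classical
  refine ⟨⟨?_, ?_⟩, ?_⟩
  · rintro ⟨Vfg, ⟨⟨m, D, rfl⟩, hCI, hVsub⟩, hmin⟩
    refine ⟨imM D.transpose, ⟨⟨m, D.transpose, rfl⟩, MPDual.transfer2 A C D hCI,
      by rw [← MPDual.orthC_ker]; exact MPDual.orthC_anti hVsub⟩, ?_⟩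
    rintro X ⟨⟨m', D', rfl⟩, hX, hXsub⟩
    have hW' : memLfg C A V (orthS (imM D')) := MPDual.backward_mem A C V D' hX hXsub
    have h1 := hmin _ hW'
    rw [← MPDual.orthC_ker]
    exact (MPDual.galois _ _).mp h1
  · rintro ⟨Kfg, ⟨⟨m, D, rfl⟩, hX, hXsub⟩, hmax⟩
    exact ⟨orthS (imM D), MPDual.backward_mem A C V D hX hXsub,
      MPDual.backward_min A C V D hmax⟩
  · rintro Vfg Kfg ⟨hVmem, hVmin⟩ ⟨⟨⟨m, D, rfl⟩, hX, hXsub⟩, hmax⟩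
    apply Set.Subset.antisymm
    · exact hVmin _ (MPDual.backward_mem A C V D hX hXsub)
    · exact MPDual.backward_min A C V D hmax _ hVmem
end
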